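/- arXiv:1603.09077 — 6 statements merged into one kernel-verified Lean document; each statement's English description precedes it below -/
import Mathlib

section
/- Let x ∈ Δ and let i ≥ 1 be an integer. Then P(Y(i,x) = i) = x_0^i + Σ_{k=1}^{i} C(i,k) · x_0^{i-k} · Σ_{r_1,…,r_k ≥ 1 pairwise distinct} x_{r_1} ⋯ x_{r_k}, where the inner sum is over ordered k-tuples of pairwise distinct positive integers. Equivalently, P(Y(i,x) < i) = 1 − x_0^i − Σ_{k=1}^{i} C(i,k) x_0^{i-k} Σ_{r_1,…,r_k distinct} x_{r_1} ⋯ x_{r_k}. -/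
open MeasureTheory ProbabilityTheory

/-- `x` belongs to the infinite simplex `Δ`: the relevant coordinates are `x 1, x 2, …`,
which are nonnegative, nonincreasing, summable with sum `|x| ≤ 1` (the value `x 0` is
irrelevant). -/
def MemDelta (x : ℕ → ℝ) : Prop :=
  (∀ r : ℕ, 1 ≤ r → 0 ≤ x r) ∧ (∀ r : ℕ, 1 ≤ r → x (r + 1) ≤ x r) ∧
    Summable (fun n : ℕ => x (n + 1)) ∧ (∑' n : ℕ, x (n + 1)) ≤ 1

/-- `x₀ := 1 - |x|`. -/
noncomputable def xZero (x : ℕ → ℝ) : ℝ := 1 - ∑' n : ℕ, x (n + 1)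

/-- Kingman's paintbox count after `i` balls (the balls being `ξ 0, …, ξ (i-1)`):
the number of balls in box `0` plus the number of nonempty boxes among the boxes `r ≥ 1`. -/
def Ycount {Ω : Type*} (ξ : ℕ → Ω → ℕ) (i : ℕ) (ω : Ω) : ℕ :=
  ((Finset.range i).filter fun l => ξ l ω = 0).card +
    (((Finset.range i).image fun l => ξ l ω).erase 0).card

/-- the i.i.d. paintbox model driven by `x ∈ Δ`: the balls `ξ 0, ξ 1, …` are independent,
each with distribution `P(ξ l = 0) = x₀` and `P(ξ l = r) = x r` for `r ≥ 1`. -/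
structure IsPaintbox {Ω : Type*} [MeasurableSpace Ω] (P : Measure Ω)
    (x : ℕ → ℝ) (ξ : ℕ → Ω → ℕ) : Prop where
  meas : ∀ l, Measurable (ξ l)
  indep : iIndepFun ξ P
  dist0 : ∀ l, P {ω | ξ l ω = 0} = ENNReal.ofReal (xZero x)
  dist : ∀ l r : ℕ, 1 ≤ r → P {ω | ξ l ω = r} = ENNReal.ofReal (x r)


section Aux
open Finset

lemma himg_aux (i : ℕ) (g : Fin i → ℕ) :
    (univ.image g).erase 0 = (univ.filter fun l : Fin i => g l ≠ 0).image g := by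
  classical
  ext n
  simp only [mem_erase, mem_image, mem_univ, true_and, mem_filter]
  aesop

lemma hsplit_aux (i : ℕ) (g : Fin i → ℕ) :
    (univ.filter fun l : Fin i => g l = 0).card
      + (univ.filter fun l : Fin i => g l ≠ 0).card = i := by
  classical
  have := Finset.card_filter_add_card_filter_not (s := (univ : Finset (Fin i)))
    (p := fun l => g l = 0)
  simpa using this

lemma core_eq (i : ℕ) (g : Fin i → ℕ) :
    ((univ.filter fun l : Fin i => g l = 0).card + ((univ.image g).erase 0).card = i)
      ↔ Set.InjOn g {l | g l ≠ 0} := by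
  classical
  rw [himg_aux]
  set N := univ.filter fun l : Fin i => g l ≠ 0 with hN
  have hsplit := hsplit_aux i g
  have hle : (N.image g).card ≤ N.card := Finset.card_image_le
  have hcoe : (↑N : Set (Fin i)) = {l | g l ≠ 0} := by ext l; simp [hN]
  rw [← hN] at hsplit
  constructor
  · intro h
    have : (N.image g).card = N.card := by omega
    rw [← hcoe]; exact Finset.card_image_iff.mp this
  · intro h
    have : (N.image g).card = N.card := Finset.card_image_iff.mpr (by rwa [hcoe])
    omega

lemma core_le (i : ℕ) (g : Fin i → ℕ) :
    (univ.filter fun l : Fin i => g l = 0).card + ((univ.image g).erase 0).card ≤ i := by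
  classical
  rw [himg_aux]
  have hsplit := hsplit_aux i g
  have hle : ((univ.filter fun l : Fin i => g l ≠ 0).image g).card
      ≤ (univ.filter fun l : Fin i => g l ≠ 0).card := Finset.card_image_le
  omega

lemma ycount_fin {Ω : Type*} (ξ : ℕ → Ω → ℕ) (i : ℕ) (ω : Ω) :
    Ycount ξ i ω = (univ.filter fun l : Fin i => ξ l.1 ω = 0).card
      + ((univ.image fun l : Fin i => ξ l.1 ω).erase 0).card := by
  classical
  have h1 : Finset.range i = univ.image (Fin.val (n := i)) := by
    ext l; simp [Fin.exists_iff, eq_comm]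
  unfold Ycount
  rw [h1, Finset.image_image]
  congr 1
  rw [Finset.filter_image, Finset.card_image_of_injective _ Fin.val_injective]

lemma ycount_le {Ω : Type*} (ξ : ℕ → Ω → ℕ) (i : ℕ) (ω : Ω) : Ycount ξ i ω ≤ i := by
  rw [ycount_fin]; exact core_le i _

lemma ycount_eq_iff {Ω : Type*} (ξ : ℕ → Ω → ℕ) (i : ℕ) (ω : Ω) :
    Ycount ξ i ω = i ↔ Set.InjOn (fun l : Fin i => ξ l.1 ω) {l | ξ l.1 ω ≠ 0} := by
  rw [ycount_fin]; exact core_eq i _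

noncomputable section

def Sq (q : ℕ → ENNReal) (k : ℕ) : ENNReal :=
  ∑' r : {r : Fin k → ℕ // Function.Injective r ∧ ∀ l, 1 ≤ r l}, ∏ l, q (r.1 l)

lemma tsum_pi_prod (q : ℕ → ENNReal) : ∀ k : ℕ,
    (∑' r : Fin k → ℕ, ∏ l, q (r l)) = (∑' n, q n) ^ k := by
  intro k
  induction k with
  | zero =>
    simp only [pow_zero, Finset.univ_eq_empty, Finset.prod_empty]
    exact tsum_eq_single (fun j => j.elim0) (fun b' hb' => absurd (funext fun j => j.elim0) hb')
  | succ k ih =>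
    rw [← Equiv.tsum_eq (Fin.consEquiv fun _ => ℕ) (fun r => ∏ l, q (r l))]
    have h : ∀ p : ℕ × (Fin k → ℕ),
        (∏ l, q ((Fin.consEquiv fun _ => ℕ) p l)) = q p.1 * ∏ l, q (p.2 l) := by
      intro p
      rw [Fin.prod_univ_succ]
      simp [Fin.consEquiv]
    refine (tsum_congr h).trans ?_
    refine (ENNReal.tsum_prod (f := fun (a : ℕ) (b : Fin k → ℕ) => q a * ∏ l, q (b l))).trans ?_
    have h2 : ∀ a : ℕ, (∑' b : Fin k → ℕ, q a * ∏ l, q (b l)) = q a * (∑' n, q n) ^ k := by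
      intro a
      rw [ENNReal.tsum_mul_left, ih]
    rw [tsum_congr h2, ENNReal.tsum_mul_right, pow_succ, mul_comm]

lemma Sq_le (q : ℕ → ENNReal) (k : ℕ) : Sq q k ≤ (∑' n, q n) ^ k := by
  rw [← tsum_pi_prod]
  exact ENNReal.summable.tsum_le_tsum_of_inj Subtype.val Subtype.val_injective
    (fun _ _ => zero_le) (fun _ => le_rfl) ENNReal.summable

lemma Sq_zero (q : ℕ → ENNReal) : Sq q 0 = 1 := by
  unfold Sq
  rw [tsum_eq_single ⟨fun j => j.elim0, fun a b _ => a.elim0, fun l => l.elim0⟩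
    (fun b' hb' => absurd (Subtype.ext (funext fun j => j.elim0)) hb')]
  simp

-- the fiber equivalence
def fiberEquiv (i : ℕ) (T : Finset (Fin i)) :
    {r : Fin T.card → ℕ // Function.Injective r ∧ ∀ l, 1 ≤ r l} ≃
      {f : {f : Fin i → ℕ // Set.InjOn f {l | f l ≠ 0}} //
        (univ.filter fun l => f.1 l ≠ 0) = T} where
  toFun r := by
    classical
    refine ⟨⟨fun l => if h : l ∈ T then r.1 ((T.orderIsoOfFin rfl).symm ⟨l, h⟩) else 0, ?_⟩, ?_⟩
    · intro a ha b hb hab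
      simp only [Set.mem_setOf_eq] at ha hb
      by_cases hat : a ∈ T
      · by_cases hbt : b ∈ T
        · simp only [dif_pos hat, dif_pos hbt] at hab
          have := r.2.1 hab
          have h2 := congrArg (T.orderIsoOfFin rfl) this
          simp only [OrderIso.apply_symm_apply] at h2
          exact congrArg Subtype.val h2
        · exact absurd (dif_neg hbt) hb
      · exact absurd (dif_neg hat) ha
    · ext l
      simp only [mem_filter, mem_univ, true_and]
      constructor
      · intro h; by_contra hl; exact h (dif_neg hl)
      · intro h
        rw [dif_pos h]
        exact Nat.one_le_iff_ne_zero.mp (r.2.2 _)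
  invFun f := by
    classical
    have hT : ∀ l : Fin i, l ∈ T → f.1.1 l ≠ 0 := by
      intro l hl
      rw [← f.2] at hl
      exact (mem_filter.mp hl).2
    refine ⟨fun j => f.1.1 ((T.orderIsoOfFin rfl j : {x // x ∈ T}) : Fin i), ?_, ?_⟩
    · intro a b hab
      have hmem : ∀ j : Fin T.card, ((T.orderIsoOfFin rfl j : {x // x ∈ T}) : Fin i)
          ∈ {l | f.1.1 l ≠ 0} := fun j => hT _ (T.orderIsoOfFin rfl j).2
      have := f.1.2 (hmem a) (hmem b) hab
      have h2 : (T.orderIsoOfFin rfl) a = (T.orderIsoOfFin rfl) b := Subtype.ext this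
      exact (T.orderIsoOfFin rfl).injective h2
    · intro j
      exact Nat.one_le_iff_ne_zero.mpr (hT _ (T.orderIsoOfFin rfl j).2)
  left_inv r := by
    classical
    apply Subtype.ext
    funext j
    have hmem : ((T.orderIsoOfFin rfl j : {x // x ∈ T}) : Fin i) ∈ T := (T.orderIsoOfFin rfl j).2
    simp only [dif_pos hmem]
    have : (⟨((T.orderIsoOfFin rfl j : {x // x ∈ T}) : Fin i), hmem⟩ : {x // x ∈ T})
        = T.orderIsoOfFin rfl j := Subtype.ext rfl
    rw [this, OrderIso.symm_apply_apply]
  right_inv f := by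
    classical
    apply Subtype.ext
    apply Subtype.ext
    funext l
    by_cases hl : l ∈ T
    · simp only [dif_pos hl]
      exact congrArg (fun s : {x // x ∈ T} => f.1.1 ↑s)
        ((T.orderIsoOfFin rfl).apply_symm_apply ⟨l, hl⟩)
    · simp only [dif_neg hl]
      have : l ∉ univ.filter fun l => f.1.1 l ≠ 0 := by rw [f.2]; exact hl
      simp only [mem_filter, mem_univ, true_and, not_not] at this
      exact this.symm

lemma fiber_sum (q : ℕ → ENNReal) (i : ℕ) (T : Finset (Fin i)) :
    (∑' f : {f : {f : Fin i → ℕ // Set.InjOn f {l | f l ≠ 0}} //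
        (univ.filter fun l => f.1 l ≠ 0) = T}, ∏ l, q (f.1.1 l))
      = q 0 ^ (i - T.card) * Sq q T.card := by
  classical
  rw [← Equiv.tsum_eq (fiberEquiv i T) (fun f => ∏ l, q (f.1.1 l))]
  have key : ∀ r : {r : Fin T.card → ℕ // Function.Injective r ∧ ∀ l, 1 ≤ r l},
      (∏ l, q (((fiberEquiv i T) r).1.1 l)) = q 0 ^ (i - T.card) * ∏ j, q (r.1 j) := by
    intro r
    have hext : ∀ l, ((fiberEquiv i T) r).1.1 l
        = if h : l ∈ T then r.1 ((T.orderIsoOfFin rfl).symm ⟨l, h⟩) else 0 := fun l => rfl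
    calc (∏ l, q (((fiberEquiv i T) r).1.1 l))
        = (∏ l ∈ T, q (((fiberEquiv i T) r).1.1 l))
            * ∏ l ∈ Tᶜ, q (((fiberEquiv i T) r).1.1 l) := (Finset.prod_mul_prod_compl T _).symm
      _ = (∏ j, q (r.1 j)) * q 0 ^ (i - T.card) := by
          congr 1
          · rw [← Finset.prod_attach T (fun l => q (((fiberEquiv i T) r).1.1 l))]
            have h1 : ∀ l : {x // x ∈ T},
                q (((fiberEquiv i T) r).1.1 l.1) = q (r.1 ((T.orderIsoOfFin rfl).symm l)) := by
              intro l
              rw [hext l.1, dif_pos l.2]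
            rw [Finset.prod_congr rfl (fun l _ => h1 l)]
            rw [← Equiv.prod_comp ((T.orderIsoOfFin rfl).toEquiv.symm) (fun j => q (r.1 j))]
            rfl
          · have h0 : ∀ l ∈ Tᶜ, q (((fiberEquiv i T) r).1.1 l) = q 0 := by
              intro l hl
              rw [hext l, dif_neg (Finset.mem_compl.mp hl)]
            rw [Finset.prod_congr rfl h0, Finset.prod_const, Finset.card_compl,
              Fintype.card_fin]
      _ = q 0 ^ (i - T.card) * ∏ j, q (r.1 j) := mul_comm _ _
  rw [tsum_congr key, ENNReal.tsum_mul_left]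
  rfl

lemma main_sum (q : ℕ → ENNReal) (i : ℕ) :
    (∑' f : {f : Fin i → ℕ // Set.InjOn f {l | f l ≠ 0}}, ∏ l, q (f.1 l))
      = ∑ k ∈ Finset.range (i + 1), (i.choose k : ENNReal) * q 0 ^ (i - k) * Sq q k := by
  classical
  rw [← Equiv.tsum_eq (Equiv.sigmaFiberEquiv
    (fun f : {f : Fin i → ℕ // Set.InjOn f {l | f l ≠ 0}} =>
      univ.filter fun l => f.1 l ≠ 0)) (fun f => ∏ l, q (f.1 l))]
  refine (ENNReal.tsum_sigma (f := fun (T : Finset (Fin i))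
    (f : {f : {f : Fin i → ℕ // Set.InjOn f {l | f l ≠ 0}} //
      (univ.filter fun l => f.1 l ≠ 0) = T}) => ∏ l, q (f.1.1 l))).trans ?_
  rw [tsum_fintype]
  rw [Finset.sum_congr rfl (fun T _ => fiber_sum q i T)]
  rw [← Finset.powerset_univ, Finset.sum_powerset]
  rw [Finset.card_univ, Fintype.card_fin]
  refine Finset.sum_congr rfl fun k _ => ?_
  rw [Finset.sum_powersetCard k univ (fun m => q 0 ^ (i - m) * Sq q m)]
  rw [Finset.card_univ, Fintype.card_fin, nsmul_eq_mul, mul_assoc]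

end
noncomputable def qE (x : ℕ → ℝ) : ℕ → ENNReal :=
  fun r => if r = 0 then ENNReal.ofReal (xZero x) else ENNReal.ofReal (x r)

variable {Ω : Type*} [MeasurableSpace Ω] {P : Measure Ω} {x : ℕ → ℝ} {ξ : ℕ → Ω → ℕ}

lemma dist_q (hξ : IsPaintbox P x ξ) (l r : ℕ) : P ((ξ l) ⁻¹' {r}) = qE x r := by
  have : (ξ l) ⁻¹' {r} = {ω | ξ l ω = r} := by ext ω; simp [Set.mem_preimage]
  rw [this]
  rcases Nat.eq_zero_or_pos r with rfl | hr
  · simpa [qE] using hξ.dist0 l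
  · rw [hξ.dist l r hr]; simp [qE, Nat.pos_iff_ne_zero.mp hr]

lemma cyl (hξ : IsPaintbox P x ξ) (i : ℕ) (f : Fin i → ℕ) :
    P {ω | ∀ l : Fin i, ξ l.1 ω = f l} = ∏ l : Fin i, qE x (f l) := by
  classical
  set F : ℕ → ℕ := fun l => if h : l < i then f ⟨l, h⟩ else 0 with hF
  have hset : {ω | ∀ l : Fin i, ξ l.1 ω = f l} = ⋂ l ∈ Finset.range i, (ξ l) ⁻¹' {F l} := by
    ext ω
    simp only [Set.mem_setOf_eq, Set.mem_iInter, Set.mem_preimage, Set.mem_singleton_iff,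
      Finset.mem_range, hF]
    constructor
    · intro h l hl; rw [dif_pos hl]; exact h ⟨l, hl⟩
    · intro h l; have := h l.1 l.2; rwa [dif_pos l.2, Fin.eta] at this
  rw [hset, iIndepFun_iff_measure_inter_preimage_eq_mul.mp hξ.indep (Finset.range i)
    (sets := fun l => {F l}) (fun _ _ => measurableSet_singleton _)]
  rw [← Fin.prod_univ_eq_prod_range (fun l => P ((ξ l) ⁻¹' {F l})) i]
  apply Finset.prod_congr rfl
  intro l _
  rw [dist_q hξ]
  congr 1
  simp [hF, l.2]

lemma event_union (ξ : ℕ → Ω → ℕ) (i : ℕ) :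
    {ω | Ycount ξ i ω = i}
      = ⋃ f : {f : Fin i → ℕ // Set.InjOn f {l | f l ≠ 0}},
          {ω | ∀ l : Fin i, ξ l.1 ω = f.1 l} := by
  ext ω
  simp only [Set.mem_setOf_eq, Set.mem_iUnion, ycount_eq_iff]
  constructor
  · intro h; exact ⟨⟨fun l => ξ l.1 ω, h⟩, fun l => rfl⟩
  · rintro ⟨⟨f, hf⟩, hω'⟩
    have hω : ∀ l : Fin i, ξ l.1 ω = f l := hω'
    intro a ha b hb hab
    exact hf (show f a ≠ 0 by rw [← hω a]; exact ha)
      (show f b ≠ 0 by rw [← hω b]; exact hb)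
      (by rw [← hω a, ← hω b]; exact hab)

lemma prob_eq (hξ : IsPaintbox P x ξ) (i : ℕ) :
    P {ω | Ycount ξ i ω = i}
      = ∑' f : {f : Fin i → ℕ // Set.InjOn f {l | f l ≠ 0}}, ∏ l : Fin i, qE x (f.1 l) := by
  rw [event_union ξ i]
  rw [measure_iUnion ?_ ?_]
  · exact tsum_congr fun f => cyl hξ i f.1
  · intro f g hfg
    refine Set.disjoint_left.mpr fun ω hf hg => hfg ?_
    exact Subtype.ext (funext fun l => by rw [← hf l, ← hg l])
  · intro f
    have : {ω | ∀ l : Fin i, ξ l.1 ω = f.1 l} = ⋂ l : Fin i, (ξ l.1) ⁻¹' {f.1 l} := by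
      ext ω; simp [Set.mem_iInter]
    rw [this]
    exact MeasurableSet.iInter fun l => (hξ.meas l.1) (measurableSet_singleton _)

lemma meas_event (hξ : IsPaintbox P x ξ) (i : ℕ) :
    MeasurableSet {ω | Ycount ξ i ω = i} := by
  rw [event_union ξ i]
  refine MeasurableSet.iUnion fun f => ?_
  have : {ω | ∀ l : Fin i, ξ l.1 ω = f.1 l} = ⋂ l : Fin i, (ξ l.1) ⁻¹' {f.1 l} := by
    ext ω; simp [Set.mem_iInter]
  rw [this]
  exact MeasurableSet.iInter fun l => (hξ.meas l.1) (measurableSet_singleton _)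

end Aux

/-- for `x ∈ Δ` and `i ≥ 1`,
`P(Y(i,x) = i) = x₀^i + ∑_{k=1}^{i} C(i,k) x₀^{i-k} ∑_{r_1,…,r_k ≥ 1 distinct} x_{r_1} ⋯ x_{r_k}`
(the inner sum running over ordered tuples of pairwise distinct positive integers), and
equivalently `P(Y(i,x) < i) = 1 - (that same quantity)`. -/
theorem statement1 {Ω : Type*} [MeasurableSpace Ω] (P : Measure Ω) [IsProbabilityMeasure P]
    (x : ℕ → ℝ) (hx : MemDelta x) (ξ : ℕ → Ω → ℕ) (hξ : IsPaintbox P x ξ)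
    (i : ℕ) (hi : 1 ≤ i) :
    (P {ω | Ycount ξ i ω = i}).toReal =
      xZero x ^ i + ∑ k ∈ Finset.Icc 1 i, (Nat.choose i k : ℝ) * xZero x ^ (i - k) *
        ∑' r : {r : Fin k → ℕ // Function.Injective r ∧ ∀ l, 1 ≤ r l}, ∏ l, x (r.1 l) ∧
    (P {ω | Ycount ξ i ω < i}).toReal =
      1 - (xZero x ^ i + ∑ k ∈ Finset.Icc 1 i, (Nat.choose i k : ℝ) * xZero x ^ (i - k) *
        ∑' r : {r : Fin k → ℕ // Function.Injective r ∧ ∀ l, 1 ≤ r l}, ∏ l, x (r.1 l)) := by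
  classical
  obtain ⟨hxnn, -, hxsum, hxle⟩ := hx
  have hx0 : 0 ≤ xZero x := by unfold xZero; linarith
  have hxnn' : ∀ n : ℕ, 0 ≤ x (n + 1) := fun n => hxnn (n + 1) (by omega)
  have hqne : ∀ m, qE x m ≠ ⊤ := by
    intro m; unfold qE; split <;> exact ENNReal.ofReal_ne_top
  have htot : (∑' n, qE x n) ≠ ⊤ := by
    rw [tsum_eq_zero_add' ENNReal.summable]
    have h1 : (∑' n : ℕ, qE x (n + 1)) = ENNReal.ofReal (∑' n : ℕ, x (n + 1)) := by
      rw [ENNReal.ofReal_tsum_of_nonneg hxnn' hxsum]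
      exact tsum_congr fun n => by simp [qE]
    rw [h1]
    exact ENNReal.add_ne_top.mpr ⟨hqne 0, ENNReal.ofReal_ne_top⟩
  have hSne : ∀ k, Sq (qE x) k ≠ ⊤ := fun k =>
    ne_top_of_le_ne_top (ENNReal.pow_ne_top htot) (Sq_le _ k)
  have hprodne : ∀ (k : ℕ) (r : {r : Fin k → ℕ // Function.Injective r ∧ ∀ l, 1 ≤ r l}),
      (∏ l, qE x (r.1 l)) ≠ ⊤ := fun k r =>
    (ENNReal.prod_lt_top (fun l _ => (hqne _).lt_top)).ne
  have hStoReal : ∀ k, (Sq (qE x) k).toReal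
      = ∑' r : {r : Fin k → ℕ // Function.Injective r ∧ ∀ l, 1 ≤ r l}, ∏ l, x (r.1 l) := by
    intro k
    rw [Sq, ENNReal.tsum_toReal_eq (hprodne k)]
    refine tsum_congr fun r => ?_
    rw [ENNReal.toReal_prod]
    refine Finset.prod_congr rfl fun l _ => ?_
    have hne : r.1 l ≠ 0 := Nat.one_le_iff_ne_zero.mp (r.2.2 l)
    simp [qE, hne, ENNReal.toReal_ofReal (hxnn _ (r.2.2 l))]
  have hq0 : qE x 0 = ENNReal.ofReal (xZero x) := by simp [qE]
  have hmain : P {ω | Ycount ξ i ω = i}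
      = ENNReal.ofReal (xZero x) ^ i
        + ∑ k ∈ Finset.Icc 1 i, (i.choose k : ENNReal)
            * ENNReal.ofReal (xZero x) ^ (i - k) * Sq (qE x) k := by
    rw [prob_eq hξ i, main_sum (qE x) i]
    have hins : Finset.range (i + 1) = insert 0 (Finset.Icc 1 i) := by
      ext m; simp; omega
    rw [hins, Finset.sum_insert (by simp), hq0]
    simp [Sq_zero]
  have hfin : ∀ k ∈ Finset.Icc 1 i, (i.choose k : ENNReal)
      * ENNReal.ofReal (xZero x) ^ (i - k) * Sq (qE x) k ≠ ⊤ := by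
    intro k _
    exact ENNReal.mul_ne_top (ENNReal.mul_ne_top (ENNReal.natCast_ne_top _)
      (ENNReal.pow_ne_top ENNReal.ofReal_ne_top)) (hSne k)
  have htR : (P {ω | Ycount ξ i ω = i}).toReal =
      xZero x ^ i + ∑ k ∈ Finset.Icc 1 i, (Nat.choose i k : ℝ) * xZero x ^ (i - k) *
        ∑' r : {r : Fin k → ℕ // Function.Injective r ∧ ∀ l, 1 ≤ r l}, ∏ l, x (r.1 l) := by
    rw [hmain, ENNReal.toReal_add (ENNReal.pow_ne_top ENNReal.ofReal_ne_top)
      (by exact (ENNReal.sum_lt_top.mpr (fun k hk => (hfin k hk).lt_top)).ne),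
      ENNReal.toReal_pow, ENNReal.toReal_ofReal hx0, ENNReal.toReal_sum hfin]
    congr 1
    refine Finset.sum_congr rfl fun k _ => ?_
    rw [ENNReal.toReal_mul, ENNReal.toReal_mul, ENNReal.toReal_pow,
      ENNReal.toReal_ofReal hx0, ENNReal.toReal_natCast, hStoReal]
  refine ⟨htR, ?_⟩
  have hcompl : {ω | Ycount ξ i ω < i} = {ω | Ycount ξ i ω = i}ᶜ := by
    ext ω
    simp only [Set.mem_setOf_eq, Set.mem_compl_iff]
    have := ycount_le ξ i ω
    omega
  rw [hcompl, prob_compl_eq_one_sub (meas_event hξ i),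
    ENNReal.toReal_sub_of_le prob_le_one ENNReal.one_ne_top, ENNReal.toReal_one, htR]
end

section
/- Let x ∈ Δ and let i ≥ 1 be an integer. If x_1 + ⋯ + x_i < 1 (i.e. x ∉ Δ_i), then lim_{k→∞} P(Y(k,x) ≤ i) = 0. If x_1 + ⋯ + x_i = 1 (i.e. x ∈ Δ_i), then P(Y(k,x) ≤ i) = 1 for every k ∈ ℕ. -/
open MeasureTheory ProbabilityTheory

lemma avoid_prob {Ω : Type*} [MeasurableSpace Ω] (P : Measure Ω) [IsProbabilityMeasure P]
    {x : ℕ → ℝ} {ξ : ℕ → Ω → ℕ} (hξ : IsPaintbox P x ξ) (r : ℕ) (p : ℝ) (hp0 : 0 ≤ p)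
    (hpr : ∀ l, P {ω | ξ l ω = r} = ENNReal.ofReal p) (S : Finset ℕ) :
    P (⋂ l ∈ S, {ω | ξ l ω ≠ r}) = ENNReal.ofReal ((1 - p) ^ S.card) := by
  have hmeas : ∀ l : ℕ, MeasurableSet {ω | ξ l ω = r} := fun l =>
    (hξ.meas l) (measurableSet_singleton r)
  have hsingle : ∀ l : ℕ, P {ω | ξ l ω ≠ r} = ENNReal.ofReal (1 - p) := by
    intro l
    have : {ω | ξ l ω ≠ r} = {ω | ξ l ω = r}ᶜ := rfl
    rw [this, measure_compl (hmeas l) (measure_ne_top _ _), hpr l, measure_univ,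
      ENNReal.ofReal_sub 1 hp0, ENNReal.ofReal_one]
  have hp1 : p ≤ 1 := ENNReal.ofReal_le_one.mp (by rw [← hpr 0]; exact prob_le_one)
  have := hξ.indep.meas_biInter (S := S) (s := fun l => {ω | ξ l ω ≠ r}) ?_
  · rw [this]
    simp only [hsingle]
    rw [Finset.prod_const, ← ENNReal.ofReal_pow (by linarith : (0:ℝ) ≤ 1 - p)]
  · intro l _
    exact ⟨{r}ᶜ, (measurableSet_singleton r).compl, rfl⟩

lemma squeeze_aux (i : ℕ) (q : ℝ) (hq0 : 0 ≤ q) (hq1 : q < 1) (m : ℕ → ℕ)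
    (hm : Filter.Tendsto m Filter.atTop Filter.atTop) (f : ℕ → ENNReal)
    (hf : ∀ k, f k ≤ ((i + 1 : ℕ) : ENNReal) * ENNReal.ofReal (q ^ m k)) :
    Filter.Tendsto (fun k => (f k).toReal) Filter.atTop (nhds 0) := by
  have h1 : Filter.Tendsto (fun k => q ^ m k) Filter.atTop (nhds 0) :=
    (tendsto_pow_atTop_nhds_zero_of_lt_one hq0 hq1).comp hm
  have h2 : Filter.Tendsto (fun k => ENNReal.ofReal (q ^ m k)) Filter.atTop (nhds 0) := by
    have := (ENNReal.continuous_ofReal.tendsto 0).comp h1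
    simpa [Function.comp_def] using this
  have h3 : Filter.Tendsto (fun k => ((i + 1 : ℕ) : ENNReal) * ENNReal.ofReal (q ^ m k))
      Filter.atTop (nhds 0) := by
    simpa using ENNReal.Tendsto.const_mul h2 (Or.inr (ENNReal.natCast_ne_top (i + 1)))
  have h4 : Filter.Tendsto f Filter.atTop (nhds 0) :=
    tendsto_of_tendsto_of_tendsto_of_le_of_le tendsto_const_nhds h3 (fun k => zero_le) hf
  have h5 := (ENNReal.tendsto_toReal (a := 0) (by simp)).comp h4
  simpa [Function.comp_def] using h5

/-- for `x ∈ Δ` and `i ≥ 1`: if `x_1 + ⋯ + x_i < 1` (i.e. `x ∉ Δ_i`) then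
`P(Y(k,x) ≤ i) → 0` as `k → ∞`; if `x_1 + ⋯ + x_i = 1` (i.e. `x ∈ Δ_i`) then
`P(Y(k,x) ≤ i) = 1` for every `k`. -/
theorem statement5 {Ω : Type*} [MeasurableSpace Ω] (P : Measure Ω) [IsProbabilityMeasure P]
    (x : ℕ → ℝ) (hx : MemDelta x) (ξ : ℕ → Ω → ℕ) (hξ : IsPaintbox P x ξ)
    (i : ℕ) (hi : 1 ≤ i) :
    ((∑ r ∈ Finset.Icc 1 i, x r) < 1 →
      Filter.Tendsto (fun k : ℕ => (P {ω | Ycount ξ k ω ≤ i}).toReal)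
        Filter.atTop (nhds 0)) ∧
    ((∑ r ∈ Finset.Icc 1 i, x r) = 1 →
      ∀ k : ℕ, P {ω | Ycount ξ k ω ≤ i} = 1) := by
  obtain ⟨hnn, hdec, hsumm, hts⟩ := hx
  have hmono : ∀ r s : ℕ, 1 ≤ r → r ≤ s → x s ≤ x r := by
    intro r s h1 hrs
    induction s with
    | zero => omega
    | succ n ih =>
      rcases Nat.lt_or_ge r (n + 1) with h | h
      · exact le_trans (hdec n (by omega)) (ih (by omega))
      · have : r = n + 1 := by omega
        simp [this]
  have htnn : 0 ≤ ∑' n : ℕ, x (n + 1) := tsum_nonneg fun n => hnn (n + 1) (by omega)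
  have hle1 : ∀ r : ℕ, 1 ≤ r → x r ≤ 1 := by
    intro r h1
    have : x ((r - 1) + 1) ≤ ∑' n : ℕ, x (n + 1) :=
      hsumm.le_tsum (r - 1) fun j _ => hnn (j + 1) (by omega)
    have hr : r - 1 + 1 = r := by omega
    rw [hr] at this
    linarith
  have hrange : ∀ m : ℕ, ∑ r ∈ Finset.Icc 1 m, x r = ∑ n ∈ Finset.range m, x (n + 1) := by
    intro m
    rw [← Finset.Ico_add_one_right_eq_Icc, Finset.sum_Ico_eq_sum_range]
    simp [add_comm]
  constructor
  · intro hlt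
    have hx0nn : 0 ≤ xZero x := by unfold xZero; linarith
    rcases eq_or_lt_of_le hx0nn with hx0 | hx0
    · -- Case B : xZero x = 0, use boxes 1, …, i+1
      have hteq : ∑' n : ℕ, x (n + 1) = 1 := by unfold xZero at hx0; linarith
      have hε0 : 0 < x (i + 1) := by
        rcases (hnn (i + 1) (by omega)).lt_or_eq with h | h
        · exact h
        · exfalso
          have hzero : ∀ n : ℕ, n ∉ Finset.range i → x (n + 1) = 0 := by
            intro n hn
            rw [Finset.mem_range] at hn; push_neg at hn
            have h1 := hmono (i + 1) (n + 1) (by omega) (by omega)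
            have h2 := hnn (n + 1) (by omega)
            linarith [h.symm]
          have heq2 := tsum_eq_sum (L := SummationFilter.unconditional ℕ) (f := fun n => x (n + 1)) hzero
          rw [hteq, ← hrange i] at heq2
          linarith
      have hε1 : x (i + 1) ≤ 1 := hle1 (i + 1) (by omega)
      apply squeeze_aux i (1 - x (i + 1)) (by linarith) (by linarith) (fun k => k)
        Filter.tendsto_id
      intro k
      have hsub : {ω | Ycount ξ k ω ≤ i} ⊆
          ⋃ r ∈ Finset.Icc 1 (i + 1), ⋂ l ∈ Finset.range k, {ω | ξ l ω ≠ r} := by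
        intro ω hω
        by_contra hω2
        have key : ∀ r ∈ Finset.Icc 1 (i + 1), ∃ l ∈ Finset.range k, ξ l ω = r := by
          intro r hr
          by_contra hc
          push_neg at hc
          exact hω2 (Set.mem_biUnion hr (Set.mem_biInter fun l hl =>
            hc l (Finset.mem_coe.mp hl)))
        have hsubset : Finset.Icc 1 (i + 1) ⊆
            ((Finset.range k).image fun l => ξ l ω).erase 0 := by
          intro r hr
          obtain ⟨l, hl, hlr⟩ := key r hr
          have hr1 : 1 ≤ r := (Finset.mem_Icc.mp hr).1
          exact Finset.mem_erase.mpr ⟨by omega, Finset.mem_image.mpr ⟨l, hl, hlr⟩⟩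
        have h3 := Finset.card_le_card hsubset
        rw [Nat.card_Icc] at h3
        have h4 : Ycount ξ k ω ≤ i := hω
        unfold Ycount at h4
        omega
      calc P {ω | Ycount ξ k ω ≤ i}
          ≤ P (⋃ r ∈ Finset.Icc 1 (i + 1), ⋂ l ∈ Finset.range k, {ω | ξ l ω ≠ r}) :=
            measure_mono hsub
        _ ≤ ∑ r ∈ Finset.Icc 1 (i + 1), P (⋂ l ∈ Finset.range k, {ω | ξ l ω ≠ r}) :=
            measure_biUnion_finset_le _ _
        _ ≤ ∑ _r ∈ Finset.Icc 1 (i + 1), ENNReal.ofReal ((1 - x (i + 1)) ^ k) := by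
            apply Finset.sum_le_sum
            intro r hr
            rw [Finset.mem_Icc] at hr
            rw [avoid_prob P hξ r (x r) (hnn r hr.1) (fun l => hξ.dist l r hr.1),
              Finset.card_range]
            apply ENNReal.ofReal_le_ofReal
            exact pow_le_pow_left₀ (by linarith [hle1 r hr.1])
              (by linarith [hmono r (i + 1) hr.1 hr.2]) k
        _ = ((i + 1 : ℕ) : ENNReal) * ENNReal.ofReal ((1 - x (i + 1)) ^ k) := by
            rw [Finset.sum_const, Nat.card_Icc]
            simp [nsmul_eq_mul]
    · -- Case A : xZero x > 0, count zeros in blocks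
      have hq0 : 0 ≤ 1 - xZero x := by unfold xZero; linarith [htnn]
      have hdiv : Filter.Tendsto (fun k : ℕ => k / (i + 1)) Filter.atTop Filter.atTop := by
        rw [Filter.tendsto_atTop_atTop]
        intro b
        exact ⟨b * (i + 1), fun k hk => (Nat.le_div_iff_mul_le (by omega)).mpr hk⟩
      apply squeeze_aux i (1 - xZero x) hq0 (by linarith) (fun k => k / (i + 1)) hdiv
      intro k
      set m := k / (i + 1) with hmdef
      have hmk : (i + 1) * m ≤ k := by rw [hmdef, Nat.mul_comm]; exact Nat.div_mul_le_self k _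
      have hsub : {ω | Ycount ξ k ω ≤ i} ⊆
          ⋃ j ∈ Finset.range (i + 1), ⋂ l ∈ Finset.Ico (j * m) (j * m + m), {ω | ξ l ω ≠ 0} := by
        intro ω hω
        by_contra hω2
        have key : ∀ j ∈ Finset.range (i + 1),
            ∃ l, (j * m ≤ l ∧ l < j * m + m) ∧ ξ l ω = 0 := by
          intro j hj
          by_contra hc
          push_neg at hc
          refine hω2 (Set.mem_biUnion hj (Set.mem_biInter fun l hl => ?_))
          have hl' := Finset.mem_Ico.mp (Finset.mem_coe.mp hl)
          exact hc l hl'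
        rcases Nat.eq_zero_or_pos m with hm0 | hm0
        · obtain ⟨l, ⟨h1, h2⟩, _⟩ := key 0 (Finset.mem_range.mpr (by omega))
          omega
        · have key' : ∀ j : ℕ, ∃ l, j < i + 1 → (j * m ≤ l ∧ l < j * m + m) ∧ ξ l ω = 0 := by
            intro j
            by_cases h : j < i + 1
            · obtain ⟨l, hl⟩ := key j (Finset.mem_range.mpr h)
              exact ⟨l, fun _ => hl⟩
            · exact ⟨0, fun h' => absurd h' h⟩
          choose f hf using key'
          have hcard : i + 1 ≤ ((Finset.range k).filter fun l => ξ l ω = 0).card := by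
            have hle := Finset.card_le_card_of_injOn (s := Finset.range (i + 1))
              (t := (Finset.range k).filter fun l => ξ l ω = 0) f ?_ ?_
            · rwa [Finset.card_range] at hle
            · intro j hj
              rw [Finset.mem_coe, Finset.mem_range] at hj
              obtain ⟨⟨ha, hb⟩, hz⟩ := hf j hj
              refine Finset.mem_filter.mpr ⟨Finset.mem_range.mpr ?_, hz⟩
              have h1 : (j + 1) * m ≤ (i + 1) * m := Nat.mul_le_mul_right m (by omega)
              calc f j < j * m + m := hb
                _ = (j + 1) * m := by ring
                _ ≤ (i + 1) * m := h1
                _ ≤ k := hmk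
            · intro j1 h1 j2 h2 heqf
              simp only [Finset.coe_range, Set.mem_Iio] at h1 h2
              obtain ⟨⟨a1, b1⟩, _⟩ := hf j1 h1
              obtain ⟨⟨a2, b2⟩, _⟩ := hf j2 h2
              by_contra hne
              rcases Nat.lt_or_ge j1 j2 with h | h
              · have hmm : (j1 + 1) * m ≤ j2 * m := Nat.mul_le_mul_right m (by omega)
                rw [Nat.succ_mul] at hmm
                omega
              · have hj : j2 < j1 := by omega
                have hmm : (j2 + 1) * m ≤ j1 * m := Nat.mul_le_mul_right m (by omega)
                rw [Nat.succ_mul] at hmm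
                omega
          have h4 : Ycount ξ k ω ≤ i := hω
          unfold Ycount at h4
          omega
      calc P {ω | Ycount ξ k ω ≤ i}
          ≤ P (⋃ j ∈ Finset.range (i + 1),
              ⋂ l ∈ Finset.Ico (j * m) (j * m + m), {ω | ξ l ω ≠ 0}) := measure_mono hsub
        _ ≤ ∑ j ∈ Finset.range (i + 1),
              P (⋂ l ∈ Finset.Ico (j * m) (j * m + m), {ω | ξ l ω ≠ 0}) :=
            measure_biUnion_finset_le _ _
        _ = ∑ _j ∈ Finset.range (i + 1), ENNReal.ofReal ((1 - xZero x) ^ m) := by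
            refine Finset.sum_congr rfl fun j _ => ?_
            rw [avoid_prob P hξ 0 (xZero x) hx0nn hξ.dist0, Nat.card_Ico,
              Nat.add_sub_cancel_left]
        _ = ((i + 1 : ℕ) : ENNReal) * ENNReal.ofReal ((1 - xZero x) ^ m) := by
            rw [Finset.sum_const, Finset.card_range]
            simp [nsmul_eq_mul]
  · -- the degenerate case
    intro heq k
    have hpart : ∑ n ∈ Finset.range i, x (n + 1) = 1 := by rw [← hrange]; exact heq
    have htge : (1 : ℝ) ≤ ∑' n : ℕ, x (n + 1) := by
      rw [← hpart]
      exact hsumm.sum_le_tsum _ (fun n _ => hnn (n + 1) (by omega))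
    have hteq : ∑' n : ℕ, x (n + 1) = 1 := le_antisymm hts htge
    have hx0 : xZero x = 0 := by simp [xZero, hteq]
    have hzero : ∀ r : ℕ, i < r → x r = 0 := by
      intro r hr
      have hins : r - 1 ∉ Finset.range i := by rw [Finset.mem_range]; omega
      have hsle : ∑ n ∈ insert (r - 1) (Finset.range i), x (n + 1) ≤ 1 := by
        rw [← hteq]
        exact hsumm.sum_le_tsum _ (fun n _ => hnn (n + 1) (by omega))
      rw [Finset.sum_insert hins, hpart] at hsle
      have hr1 : r - 1 + 1 = r := by omega
      rw [hr1] at hsle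
      have := hnn r (by omega)
      linarith
    have hBnull : ∀ l : ℕ, P {ω | ξ l ω = 0 ∨ i < ξ l ω} = 0 := by
      intro l
      have hsub : {ω | ξ l ω = 0 ∨ i < ξ l ω} ⊆
          ⋃ r : ℕ, if r = 0 ∨ i < r then {ω | ξ l ω = r} else ∅ := by
        intro ω hω
        have hω' : ξ l ω = 0 ∨ i < ξ l ω := hω
        refine Set.mem_iUnion.mpr ⟨ξ l ω, ?_⟩
        rw [if_pos hω']
        exact rfl
      refine measure_mono_null hsub (measure_iUnion_null fun r => ?_)
      by_cases h : r = 0 ∨ i < r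
      · rw [if_pos h]
        rcases h with h | h
        · subst h; rw [hξ.dist0 l, hx0]; simp
        · rw [hξ.dist l r (by omega), hzero r h]; simp
      · rw [if_neg h]; simp
    have hcompl : {ω | Ycount ξ k ω ≤ i}ᶜ ⊆ ⋃ l : ℕ, {ω | ξ l ω = 0 ∨ i < ξ l ω} := by
      intro ω hω
      by_contra hω2
      apply hω
      simp only [Set.mem_iUnion, Set.mem_setOf_eq, not_exists, not_or, not_lt] at hω2
      show Ycount ξ k ω ≤ i
      unfold Ycount
      have h1 : ((Finset.range k).filter fun l => ξ l ω = 0) = ∅ := by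
        apply Finset.filter_eq_empty_iff.mpr
        intro l _
        exact (hω2 l).1
      have h2 : (((Finset.range k).image fun l => ξ l ω).erase 0) ⊆ Finset.Icc 1 i := by
        intro y hy
        have hy0 := Finset.ne_of_mem_erase hy
        have hym := Finset.mem_of_mem_erase hy
        simp only [Finset.mem_image] at hym
        obtain ⟨l, _, hl⟩ := hym
        subst hl
        exact Finset.mem_Icc.mpr ⟨by omega, (hω2 l).2⟩
      have h3 := Finset.card_le_card h2
      rw [Nat.card_Icc] at h3
      simp [h1]
      omega
    have hnull : P {ω | Ycount ξ k ω ≤ i}ᶜ = 0 :=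
      measure_mono_null hcompl (measure_iUnion_null hBnull)
    refine le_antisymm prob_le_one ?_
    have := measure_union_le (μ := P) {ω | Ycount ξ k ω ≤ i} {ω | Ycount ξ k ω ≤ i}ᶜ
    rw [Set.union_compl_self, measure_univ, hnull, add_zero] at this
    exact this
end

section
/- Let x ∈ Δ and let i ≥ 1 be an integer. Then Σ_{j=i+1}^{∞} P(Y(j,x) = i and Y(j+1,x) = i+1) equals P(Y(i+1,x) ≤ i) if x ∉ Δ_i, and equals 0 if x ∈ Δ_i. -/
open MeasureTheory ProbabilityTheory

lemma Ycount_succ {Ω : Type*} (ξ : ℕ → Ω → ℕ) (m : ℕ) (ω : Ω) :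
    Ycount ξ (m + 1) ω =
      Ycount ξ m ω + (if ξ m ω = 0 ∨ ∀ l < m, ξ l ω ≠ ξ m ω then 1 else 0) := by
  classical
  unfold Ycount
  rw [Finset.range_add_one, Finset.filter_insert, Finset.image_insert]
  by_cases h0 : ξ m ω = 0
  · rw [if_pos h0, Finset.card_insert_of_notMem (by simp), h0,
      Finset.erase_insert_eq_erase, if_pos (Or.inl rfl)]
    omega
  · rw [if_neg h0, Finset.erase_insert_of_ne h0]
    by_cases hnew : ∀ l < m, ξ l ω ≠ ξ m ω
    · rw [Finset.card_insert_of_notMem (by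
        simp only [Finset.mem_erase, Finset.mem_image, Finset.mem_range, not_and, not_exists]
        intro _ l hl
        exact hnew l hl), if_pos (Or.inr hnew)]
      omega
    · push_neg at hnew
      obtain ⟨l, hl, hle⟩ := hnew
      rw [Finset.card_insert_of_mem (by
        simp only [Finset.mem_erase, Finset.mem_image, Finset.mem_range]
        exact ⟨h0, l, hl, hle⟩), if_neg (by push_neg; exact ⟨h0, ⟨l, hl, hle⟩⟩)]
      simp

lemma Ycount_mono {Ω : Type*} (ξ : ℕ → Ω → ℕ) (ω : Ω) {a b : ℕ} (h : a ≤ b) :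
    Ycount ξ a ω ≤ Ycount ξ b ω := by
  classical
  unfold Ycount
  have hsub : Finset.range a ⊆ Finset.range b := Finset.range_subset_range.2 h
  exact Nat.add_le_add
    (Finset.card_le_card (Finset.filter_subset_filter _ hsub))
    (Finset.card_le_card (Finset.erase_subset_erase _ (Finset.image_subset_image hsub)))

lemma Ycount_succ_le {Ω : Type*} (ξ : ℕ → Ω → ℕ) (m : ℕ) (ω : Ω) :
    Ycount ξ (m + 1) ω ≤ Ycount ξ m ω + 1 := by
  classical
  rw [Ycount_succ]
  split <;> omega

/-- If `Y` is at most `i` at time `i+1` but eventually reaches `i+1`, there is a time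
`j = i+1+m` with `Y j = i` and `Y (j+1) = i+1`. -/
lemma Ycount_hit {Ω : Type*} (ξ : ℕ → Ω → ℕ) (i : ℕ) (ω : Ω)
    (h1 : Ycount ξ (i + 1) ω ≤ i) (h2 : ∃ M, i + 1 ≤ Ycount ξ M ω) :
    ∃ m, Ycount ξ (i + 1 + m) ω = i ∧ Ycount ξ (i + 1 + m + 1) ω = i + 1 := by
  classical
  obtain ⟨M, hM⟩ := h2
  have hMgt : i + 1 < M := by
    by_contra hc
    have : i + 1 ≤ Ycount ξ (i + 1) ω :=
      le_trans hM (Ycount_mono ξ ω (show M ≤ i + 1 by omega))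
    omega
  have hex : ∃ k, i + 1 ≤ Ycount ξ (i + 1 + k + 1) ω := by
    refine ⟨M - i - 2, ?_⟩
    have : i + 1 + (M - i - 2) + 1 = M := by omega
    rwa [this]
  classical
  let k0 := Nat.find hex
  have hk0 : i + 1 ≤ Ycount ξ (i + 1 + k0 + 1) ω := Nat.find_spec hex
  have hprev : Ycount ξ (i + 1 + k0) ω ≤ i := by
    rcases Nat.eq_zero_or_pos k0 with hz | hpos
    · rw [hz]; simpa using h1
    · have := Nat.find_min hex (m := k0 - 1) (by omega)
      have heq : i + 1 + (k0 - 1) + 1 = i + 1 + k0 := by omega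
      rw [heq] at this
      omega
  have hstep := Ycount_succ_le ξ (i + 1 + k0) ω
  refine ⟨k0, ?_, ?_⟩ <;> omega

lemma measurable_Ycount {Ω : Type*} [MeasurableSpace Ω] (ξ : ℕ → Ω → ℕ)
    (hm : ∀ l, Measurable (ξ l)) (m : ℕ) : Measurable (Ycount ξ m) := by
  classical
  induction m with
  | zero =>
    have : Ycount ξ 0 = fun _ => 0 := by funext ω; simp [Ycount]
    rw [this]; exact measurable_const
  | succ n ih =>
    have heq : Ycount ξ (n + 1) = fun ω =>
        Ycount ξ n ω + (if ξ n ω = 0 ∨ ∀ l < n, ξ l ω ≠ ξ n ω then 1 else 0) := by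
      funext ω; exact Ycount_succ ξ n ω
    rw [heq]
    refine ih.add (Measurable.ite ?_ measurable_const measurable_const)
    have h1 : MeasurableSet {ω : Ω | ξ n ω = 0} := (hm n) (measurableSet_singleton 0)
    have h2 : MeasurableSet {ω : Ω | ∀ l < n, ξ l ω ≠ ξ n ω} := by
      have : {ω : Ω | ∀ l < n, ξ l ω ≠ ξ n ω} = ⋂ l ∈ Finset.range n, {ω | ξ l ω ≠ ξ n ω} := by
        ext ω; simp
      rw [this]
      refine Finset.measurableSet_biInter _ fun l _ => ?_
      have : {ω : Ω | ξ l ω ≠ ξ n ω} = (fun ω => (ξ l ω, ξ n ω)) ⁻¹' {p : ℕ × ℕ | p.1 ≠ p.2} := rfl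
      rw [this]
      exact ((hm l).prodMk (hm n)) ((Set.to_countable _).measurableSet)
    exact h1.union h2


lemma iIndepSet_preimage {Ω : Type*} [MeasurableSpace Ω] (P : Measure Ω)
    (ξ : ℕ → Ω → ℕ) (hind : iIndepFun ξ P) (r : ℕ) :
    iIndepSet (fun l => ξ l ⁻¹' {r}) P := by
  rw [← iIndep_comap_mem_iff]
  have h := hind.comp (g := fun _ n => n ∈ ({r} : Set ℕ)) (fun _ => measurable_of_countable _)
  exact h

lemma ae_hits {Ω : Type*} [MeasurableSpace Ω] (P : Measure Ω) [IsProbabilityMeasure P]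
    (ξ : ℕ → Ω → ℕ) (hm : ∀ l, Measurable (ξ l))
    (hind : iIndepFun ξ P) (r : ℕ)
    (c : ENNReal) (hc : c ≠ 0) (hp : ∀ l, P {ω | ξ l ω = r} = c) :
    P {ω | ∀ N, ∃ l, N ≤ l ∧ ξ l ω = r}ᶜ = 0 := by
  set s : ℕ → Set Ω := fun l => ξ l ⁻¹' {r} with hs
  have hsm : ∀ l, MeasurableSet (s l) := fun l => (hm l) (measurableSet_singleton r)
  have htsum : (∑' l, P (s l)) = ⊤ := by
    have : ∀ l, P (s l) = c := fun l => hp l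
    rw [tsum_congr this]
    exact ENNReal.tsum_const_eq_top_of_ne_zero hc
  have hone : P (Filter.limsup s Filter.atTop) = 1 :=
    measure_limsup_eq_one hsm (iIndepSet_preimage P ξ hind r) htsum
  have hls : Filter.limsup s Filter.atTop = {ω | ∀ N, ∃ l, N ≤ l ∧ ξ l ω = r} := by
    ext ω
    rw [Filter.mem_limsup_iff_frequently_mem, Filter.frequently_atTop]
    simp only [hs, Set.mem_preimage, Set.mem_singleton_iff, Set.mem_setOf_eq]
  rw [← hls, prob_compl_eq_zero_iff (MeasurableSet.measurableSet_limsup hsm)]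
  exact hone

lemma MemDelta.anti {x : ℕ → ℝ} (hx : MemDelta x) {a b : ℕ} (ha : 1 ≤ a) (hab : a ≤ b) :
    x b ≤ x a := by
  obtain ⟨k, rfl⟩ := Nat.exists_eq_add_of_le hab
  induction k with
  | zero => simp
  | succ n ih => exact le_trans (hx.2.1 (a + n) (by omega)) (ih (by omega))

lemma MemDelta.partial_eq {x : ℕ → ℝ} (i : ℕ) :
    (∑ r ∈ Finset.Icc 1 i, x r) = ∑ k ∈ Finset.range i, x (k + 1) := by
  rw [← Finset.Ico_add_one_right_eq_Icc, Finset.sum_Ico_eq_sum_range]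
  simp [Nat.add_comm]

lemma MemDelta.partial_le {x : ℕ → ℝ} (hx : MemDelta x) (i : ℕ) :
    (∑ r ∈ Finset.Icc 1 i, x r) ≤ ∑' n : ℕ, x (n + 1) := by
  rw [MemDelta.partial_eq]
  exact Summable.sum_le_tsum _ (fun k _ => hx.1 (k + 1) (by omega)) hx.2.2.1

/-- if the partial sum is not 1, either `x₀ > 0` or `x (i+1) > 0`. -/
lemma MemDelta.pos_of_ne_one {x : ℕ → ℝ} (hx : MemDelta x) (i : ℕ)
    (hne : (∑ r ∈ Finset.Icc 1 i, x r) ≠ 1) :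
    0 < xZero x ∨ 0 < x (i + 1) := by
  by_cases h0 : 0 < xZero x
  · exact Or.inl h0
  · right
    have ht1 : (∑' n : ℕ, x (n + 1)) = 1 := by
      have := hx.2.2.2; unfold xZero at h0; linarith
    have hSlt : (∑ r ∈ Finset.Icc 1 i, x r) < 1 :=
      lt_of_le_of_ne (le_trans (hx.partial_le i) hx.2.2.2) hne
    have htail := Summable.sum_add_tsum_nat_add (f := fun n => x (n + 1)) i hx.2.2.1
    have htailpos : 0 < ∑' k : ℕ, x (k + i + 1) := by
      rw [MemDelta.partial_eq i] at hSlt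
      nlinarith [htail, ht1]
    by_contra hc
    push_neg at hc
    have hx0 : x (i + 1) = 0 := le_antisymm hc (hx.1 (i + 1) (by omega))
    have : (∑' k : ℕ, x (k + i + 1)) = 0 := by
      have : ∀ k : ℕ, x (k + i + 1) = 0 := fun k =>
        le_antisymm (hx0 ▸ hx.anti (by omega) (by omega)) (hx.1 _ (by omega))
      simp [this]
    linarith

lemma MemDelta.eq_one_case {x : ℕ → ℝ} (hx : MemDelta x) (i : ℕ)
    (heq : (∑ r ∈ Finset.Icc 1 i, x r) = 1) :
    xZero x = 0 ∧ ∀ r, i < r → x r = 0 := by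
  have ht1 : (∑' n : ℕ, x (n + 1)) = 1 :=
    le_antisymm hx.2.2.2 (heq ▸ hx.partial_le i)
  refine ⟨by simp [xZero, ht1], fun r hr => ?_⟩
  have htail := Summable.sum_add_tsum_nat_add (f := fun n => x (n + 1)) i hx.2.2.1
  have htail0 : (∑' k : ℕ, x (k + i + 1)) = 0 := by
    rw [MemDelta.partial_eq i] at heq
    linarith
  have hsumm : Summable (fun k : ℕ => x (k + i + 1)) := by
    have := (summable_nat_add_iff i).2 hx.2.2.1
    simpa using this
  have hler : x ((r - i - 1) + i + 1) ≤ 0 := by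
    rw [← htail0]
    exact Summable.le_tsum hsumm _ (fun j _ => hx.1 _ (by omega))
  have : x r ≤ 0 := by
    have : (r - i - 1) + i + 1 = r := by omega
    rwa [this] at hler
  exact le_antisymm this (hx.1 r (by omega))

lemma escape_lemma {Ω : Type*} [MeasurableSpace Ω] (P : Measure Ω) [IsProbabilityMeasure P]
    (x : ℕ → ℝ) (hx : MemDelta x) (ξ : ℕ → Ω → ℕ) (hξ : IsPaintbox P x ξ)
    (i : ℕ) (hne : (∑ r ∈ Finset.Icc 1 i, x r) ≠ 1) :
    P {ω | ∀ m, Ycount ξ m ω ≤ i} = 0 := by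
  classical
  rcases hx.pos_of_ne_one i hne with h0 | hpos
  · -- case `x₀ > 0`: infinitely many zeros a.s.
    have hB := ae_hits P ξ hξ.meas hξ.indep 0 (ENNReal.ofReal (xZero x))
      (by simpa using (ENNReal.ofReal_pos.2 h0).ne') hξ.dist0
    refine measure_mono_null ?_ hB
    intro ω hω
    simp only [Set.mem_setOf_eq] at hω
    simp only [Set.mem_compl_iff, Set.mem_setOf_eq]
    intro hBmem
    have claim : ∀ k : ℕ, ∃ m, k ≤ ((Finset.range m).filter fun l => ξ l ω = 0).card := by
      intro k
      induction k with
      | zero => exact ⟨0, Nat.zero_le _⟩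
      | succ n ih =>
        obtain ⟨m, hm⟩ := ih
        obtain ⟨l, hl, hl0⟩ := hBmem m
        refine ⟨l + 1, ?_⟩
        have hnotmem : l ∉ (Finset.range m).filter fun j => ξ j ω = 0 := by
          simp only [Finset.mem_filter, Finset.mem_range, not_and]
          omega
        have hsub : insert l ((Finset.range m).filter fun j => ξ j ω = 0) ⊆
            (Finset.range (l + 1)).filter fun j => ξ j ω = 0 := by
          intro a ha
          rcases Finset.mem_insert.1 ha with rfl | ha
          · simp [hl0]
          · simp only [Finset.mem_filter, Finset.mem_range] at ha ⊢
            exact ⟨by omega, ha.2⟩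
        calc n + 1 ≤ (insert l ((Finset.range m).filter fun j => ξ j ω = 0)).card := by
              rw [Finset.card_insert_of_notMem hnotmem]; omega
          _ ≤ _ := Finset.card_le_card hsub
    obtain ⟨m, hm⟩ := claim (i + 1)
    have hY : i + 1 ≤ Ycount ξ m ω := le_trans hm (Nat.le_add_right _ _)
    exact absurd (hω m) (by omega)
  · -- case `x (i+1) > 0`: each box `1, …, i+1` is hit a.s.
    set D : ℕ → Set Ω := fun r =>
      if 1 ≤ r ∧ r ≤ i + 1 then {ω | ∀ N, ∃ l, N ≤ l ∧ ξ l ω = r}ᶜ else ∅ with hD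
    have hD0 : ∀ r, P (D r) = 0 := by
      intro r
      by_cases hr : 1 ≤ r ∧ r ≤ i + 1
      · simp only [hD, if_pos hr]
        have hxr : 0 < x r := lt_of_lt_of_le hpos (hx.anti hr.1 hr.2)
        exact ae_hits P ξ hξ.meas hξ.indep r _
          (ENNReal.ofReal_pos.2 hxr).ne' (fun l => hξ.dist l r hr.1)
      · simp [hD, if_neg hr]
    refine measure_mono_null ?_ (measure_iUnion_null hD0)
    intro ω hω
    simp only [Set.mem_setOf_eq] at hω
    by_contra hc
    simp only [Set.mem_iUnion, not_exists] at hc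
    have hhit : ∀ r, 1 ≤ r → r ≤ i + 1 → ∃ l, ξ l ω = r := by
      intro r h1 h2
      have := hc r
      rw [hD] at this
      simp only [if_pos (And.intro h1 h2), Set.mem_compl_iff, Set.mem_setOf_eq, not_not,
        not_forall] at this
      push_neg at this
      obtain ⟨l, _, hl⟩ := this 0
      exact ⟨l, hl⟩
    set g : ℕ → ℕ := fun r => if h : ∃ l, ξ l ω = r then Nat.find h else 0 with hg
    set m : ℕ := (Finset.Icc 1 (i + 1)).sup g + 1 with hm
    have hsub : Finset.Icc 1 (i + 1) ⊆ ((Finset.range m).image fun l => ξ l ω).erase 0 := by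
      intro r hr
      rw [Finset.mem_Icc] at hr
      have hex : ∃ l, ξ l ω = r := hhit r hr.1 hr.2
      have hgr : ξ (g r) ω = r := by
        rw [hg]
        simp only [dif_pos hex]
        exact Nat.find_spec hex
      have hgle : g r < m := by
        have := Finset.le_sup (f := g) (Finset.mem_Icc.2 hr)
        omega
      refine Finset.mem_erase.2 ⟨by omega, ?_⟩
      exact Finset.mem_image.2 ⟨g r, Finset.mem_range.2 hgle, hgr⟩
    have hcard : i + 1 ≤ (((Finset.range m).image fun l => ξ l ω).erase 0).card := by
      have := Finset.card_le_card hsub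
      rwa [Nat.card_Icc, Nat.add_sub_cancel] at this
    have : i + 1 ≤ Ycount ξ m ω := le_trans hcard (Nat.le_add_left _ _)
    exact absurd (hω m) (by omega)

lemma delta_null {Ω : Type*} [MeasurableSpace Ω] (P : Measure Ω) [IsProbabilityMeasure P]
    (x : ℕ → ℝ) (ξ : ℕ → Ω → ℕ) (hξ : IsPaintbox P x ξ) (i : ℕ)
    (h0 : xZero x = 0) (htail : ∀ r, i < r → x r = 0) (j : ℕ) :
    P {ω | i + 1 ≤ Ycount ξ j ω} = 0 := by
  classical
  set N : Set Ω := ⋃ l : ℕ, ({ω | ξ l ω = 0} ∪ ⋃ k : ℕ, {ω | ξ l ω = i + 1 + k}) with hN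
  have hN0 : P N = 0 := by
    refine measure_iUnion_null fun l => measure_union_null ?_ (measure_iUnion_null fun k => ?_)
    · rw [hξ.dist0 l, h0]; simp
    · rw [hξ.dist l (i + 1 + k) (by omega), htail (i + 1 + k) (by omega)]; simp
  refine measure_mono_null ?_ hN0
  intro ω hω
  simp only [Set.mem_setOf_eq] at hω
  by_contra hc
  rw [hN] at hc
  simp only [Set.mem_iUnion, Set.mem_union, Set.mem_setOf_eq, not_exists, not_or] at hc
  have hrange : ∀ l, 1 ≤ ξ l ω ∧ ξ l ω ≤ i := by
    intro l
    have h1 := (hc l).1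
    have h2 := (hc l).2
    constructor
    · omega
    · by_contra hgt
      exact h2 (ξ l ω - i - 1) (by omega)
  have hfilter : ((Finset.range j).filter fun l => ξ l ω = 0).card = 0 := by
    rw [Finset.card_eq_zero, Finset.filter_eq_empty_iff]
    intro l _
    have := (hrange l).1
    omega
  have himg : ((Finset.range j).image fun l => ξ l ω).erase 0 ⊆ Finset.Icc 1 i := by
    intro a ha
    rw [Finset.mem_erase] at ha
    obtain ⟨l, _, rfl⟩ := Finset.mem_image.1 ha.2
    exact Finset.mem_Icc.2 (hrange l)
  have hcard : (((Finset.range j).image fun l => ξ l ω).erase 0).card ≤ i := by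
    have := Finset.card_le_card himg
    rwa [Nat.card_Icc, Nat.add_sub_cancel] at this
  unfold Ycount at hω
  omega

/-- for `x ∈ Δ` and `i ≥ 1`,
`∑_{j=i+1}^{∞} P(Y(j,x) = i, Y(j+1,x) = i+1)` equals `P(Y(i+1,x) ≤ i)` if `x ∉ Δ_i`
(i.e. `x_1 + ⋯ + x_i ≠ 1`), and equals `0` if `x ∈ Δ_i` (i.e. `x_1 + ⋯ + x_i = 1`).
The sum over `j ≥ i+1` is written as a sum over `m : ℕ` with `j = i + 1 + m`. -/
theorem statement6 {Ω : Type*} [MeasurableSpace Ω] (P : Measure Ω) [IsProbabilityMeasure P]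
    (x : ℕ → ℝ) (hx : MemDelta x) (ξ : ℕ → Ω → ℕ) (hξ : IsPaintbox P x ξ)
    (i : ℕ) (hi : 1 ≤ i) :
    ((∑ r ∈ Finset.Icc 1 i, x r) ≠ 1 →
      (∑' m : ℕ, (P {ω | Ycount ξ (i + 1 + m) ω = i ∧
          Ycount ξ (i + 1 + m + 1) ω = i + 1}).toReal) =
        (P {ω | Ycount ξ (i + 1) ω ≤ i}).toReal) ∧
    ((∑ r ∈ Finset.Icc 1 i, x r) = 1 →
      (∑' m : ℕ, (P {ω | Ycount ξ (i + 1 + m) ω = i ∧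
          Ycount ξ (i + 1 + m + 1) ω = i + 1}).toReal) = 0) := by
  classical
  set E : ℕ → Set Ω := fun m => {ω | Ycount ξ (i + 1 + m) ω = i ∧
      Ycount ξ (i + 1 + m + 1) ω = i + 1} with hE
  have hEmeas : ∀ m, MeasurableSet (E m) := by
    intro m
    have h1 := (measurable_Ycount ξ hξ.meas (i + 1 + m)) (measurableSet_singleton i)
    have h2 := (measurable_Ycount ξ hξ.meas (i + 1 + m + 1)) (measurableSet_singleton (i + 1))
    exact h1.inter h2
  have hkey : ∀ a b : ℕ, a < b → ∀ ω, ω ∈ E a → ω ∉ E b := by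
    intro a b hab ω ha hb
    rw [hE] at ha hb
    have hmono : Ycount ξ (i + 1 + a + 1) ω ≤ Ycount ξ (i + 1 + b) ω :=
      Ycount_mono ξ ω (by omega)
    simp only [Set.mem_setOf_eq] at ha hb
    omega
  have hdisj : Pairwise (Function.onFun Disjoint E) := by
    intro a b hab
    rcases hab.lt_or_gt with h | h
    · exact Set.disjoint_left.2 fun ω hωa hωb => hkey a b h ω hωa hωb
    · exact Set.disjoint_right.2 fun ω hωb hωa => hkey b a h ω hωb hωa
  have hUnion : P (⋃ m, E m) = ∑' m, P (E m) := measure_iUnion hdisj hEmeas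
  have htoReal : (∑' m : ℕ, (P (E m)).toReal) = (P (⋃ m, E m)).toReal := by
    rw [hUnion, ENNReal.tsum_toReal_eq (fun m => measure_ne_top P _)]
  constructor
  · -- main case
    intro hne
    rw [htoReal]
    congr 1
    have hsub1 : (⋃ m, E m) ⊆ {ω | Ycount ξ (i + 1) ω ≤ i} := by
      intro ω hω
      obtain ⟨m, hm⟩ := Set.mem_iUnion.1 hω
      rw [hE] at hm
      simp only [Set.mem_setOf_eq] at hm ⊢
      have := Ycount_mono ξ ω (show i + 1 ≤ i + 1 + m by omega)
      omega
    have hA0 : P {ω | ∀ m, Ycount ξ m ω ≤ i} = 0 := escape_lemma P x hx ξ hξ i hne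
    have hsub2 : {ω | Ycount ξ (i + 1) ω ≤ i} ⊆
        (⋃ m, E m) ∪ {ω | ∀ m, Ycount ξ m ω ≤ i} := by
      intro ω hω
      simp only [Set.mem_setOf_eq] at hω
      by_cases hall : ∀ m, Ycount ξ m ω ≤ i
      · exact Or.inr hall
      · push_neg at hall
        obtain ⟨M, hM⟩ := hall
        obtain ⟨m, hm1, hm2⟩ := Ycount_hit ξ i ω hω ⟨M, by omega⟩
        exact Or.inl (Set.mem_iUnion.2 ⟨m, by rw [hE]; exact ⟨hm1, hm2⟩⟩)
    refine le_antisymm (measure_mono hsub1) ?_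
    calc P {ω | Ycount ξ (i + 1) ω ≤ i}
        ≤ P ((⋃ m, E m) ∪ {ω | ∀ m, Ycount ξ m ω ≤ i}) := measure_mono hsub2
      _ ≤ P (⋃ m, E m) + P {ω | ∀ m, Ycount ξ m ω ≤ i} := measure_union_le _ _
      _ = P (⋃ m, E m) := by rw [hA0, add_zero]
  · -- degenerate case
    intro heq
    obtain ⟨h0, htail⟩ := hx.eq_one_case i heq
    have hEzero : ∀ m, P (E m) = 0 := by
      intro m
      refine measure_mono_null ?_ (delta_null P x ξ hξ i h0 htail (i + 1 + m + 1))
      intro ω hω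
      rw [hE] at hω
      simp only [Set.mem_setOf_eq] at hω ⊢
      omega
    simp only [hE] at hEzero ⊢
    simp [hEzero]
end

section
/- (Siegmund duality of the rates of the block counting process and the fixation line.) Let c ≥ 0 and let ν be a Borel measure on Δ (with respect to the product topology on sequences). For integers 1 ≤ j < i define q_{ij} := c·C(i,2)·1_{{j = i−1}} + ∫_Δ P(Y(i,x) = j) ν(dx), and for integers 1 ≤ j < k define γ_{jk} := c·C(k,2)·1_{{k = j+1}} + ∫_Δ P(Y(k,x) = j, Y(k+1,x) = j+1) ν(dx), both Lebesgue integrals of the measurable nonnegative integrands taken with values in [0,∞]. Then for all integers i > j ≥ 1: Σ_{k=1}^{j} q_{ik} = ν(Δ_j) + Σ_{k=i}^{∞} γ_{jk}, as an identity in [0,∞]. -/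
open MeasureTheory ProbabilityTheory

/-- the distribution on `ℕ` of one paintbox ball driven by `x ∈ Δ`:
mass `x₀` at `0` and mass `x r` at each `r ≥ 1`. -/
noncomputable def paintMeasure (x : ℕ → ℝ) : Measure ℕ :=
  ENNReal.ofReal (xZero x) • Measure.dirac 0 +
    Measure.sum fun r : ℕ => ENNReal.ofReal (x (r + 1)) • Measure.dirac (r + 1)

/-- paintbox count for finitely many balls `ξ 0, …, ξ (m-1)`: the number of balls
in box `0` plus the number of nonempty boxes among the boxes `r ≥ 1`. -/
def YcountFin {m : ℕ} (ξ : Fin m → ℕ) : ℕ :=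
  (Finset.univ.filter fun l => ξ l = 0).card + ((Finset.univ.image ξ).erase 0).card

/-- `P(Y(i,x) = j)`, computed under the i.i.d. product measure of `i` balls. -/
noncomputable def probYeq (x : ℕ → ℝ) (i j : ℕ) : ENNReal :=
  Measure.pi (fun _ : Fin i => paintMeasure x) {ξ | YcountFin ξ = j}

/-- `P(Y(k,x) = j, Y(k+1,x) = j+1)`, computed under the i.i.d. product measure of
`k+1` balls, `Y(k,x)` being evaluated on the first `k` of them. -/
noncomputable def probYpair (x : ℕ → ℝ) (k j : ℕ) : ENNReal :=
  Measure.pi (fun _ : Fin (k + 1) => paintMeasure x)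
    {ξ | YcountFin (ξ ∘ Fin.castSucc) = j ∧ YcountFin ξ = j + 1}

/-! ### Auxiliary material -/

section Aux

/-! #### Weights -/

noncomputable def wgt (x : ℕ → ℝ) : ℕ → ENNReal
  | 0 => ENNReal.ofReal (xZero x)
  | (r+1) => ENNReal.ofReal (x (r+1))

lemma wgt_zero (x : ℕ → ℝ) : wgt x 0 = ENNReal.ofReal (1 - ∑' n : ℕ, x (n + 1)) := rfl
lemma wgt_succ (x : ℕ → ℝ) (r : ℕ) : wgt x (r+1) = ENNReal.ofReal (x (r+1)) := rfl

lemma paintMeasure_singleton (x : ℕ → ℝ) (n : ℕ) : paintMeasure x {n} = wgt x n := by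
  have h : ∀ m k : ℕ, (Measure.dirac m : Measure ℕ) {k} = if m = k then 1 else 0 := by
    intro m k
    rw [Measure.dirac_apply' _ (measurableSet_singleton _)]
    simp [Set.indicator_apply]
  cases n with
  | zero =>
    simp only [paintMeasure, Measure.add_apply, Measure.smul_apply, smul_eq_mul,
      Measure.sum_apply _ (measurableSet_singleton _), h]
    simp [wgt]
  | succ r =>
    simp only [paintMeasure, Measure.add_apply, Measure.smul_apply, smul_eq_mul,
      Measure.sum_apply _ (measurableSet_singleton _), h]
    rw [tsum_eq_single r (by intro b hb; simp [hb])]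
    simp [wgt]

instance (x : ℕ → ℝ) : SigmaFinite (paintMeasure x) := by
  apply Measure.sigmaFinite_of_countable (Set.countable_range fun n : ℕ => ({n} : Set ℕ))
  · rintro s ⟨n, rfl⟩
    rw [paintMeasure_singleton]
    cases n <;> simp [wgt]
  · rw [Set.sUnion_range]
    exact Set.iUnion_of_singleton ℕ

noncomputable def Wgt (x : ℕ → ℝ) (n : ℕ) (ξ : Fin n → ℕ) : ENNReal := ∏ l, wgt x (ξ l)

lemma pi_apply (x : ℕ → ℝ) (n : ℕ) (S : Set (Fin n → ℕ)) :
    Measure.pi (fun _ : Fin n => paintMeasure x) S = ∑' ξ : Fin n → ℕ, S.indicator (Wgt x n) ξ := by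
  rw [← Measure.tsum_indicator_apply_singleton _ S (Set.to_countable S).measurableSet]
  refine tsum_congr fun ξ => ?_
  by_cases h : ξ ∈ S
  · rw [Set.indicator_of_mem h, Set.indicator_of_mem h, ← Set.univ_pi_singleton ξ,
      Measure.pi_pi]
    simp [Wgt, paintMeasure_singleton]
  · rw [Set.indicator_of_notMem h, Set.indicator_of_notMem h]

/-! #### Combinatorics of `YcountFin` -/

lemma Ymono {a b : ℕ} (e : Fin a → Fin b) (he : Function.Injective e) (ξ : Fin b → ℕ) :
    YcountFin (ξ ∘ e) ≤ YcountFin ξ := by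
  unfold YcountFin
  gcongr
  · exact Finset.card_le_card_of_injOn e (fun a ha => by simpa using ha) he.injOn
  · intro v hv
    simp only [Finset.mem_image, Finset.mem_univ, true_and] at hv ⊢
    obtain ⟨l, hl⟩ := hv
    exact ⟨e l, hl⟩

lemma Yimage {n : ℕ} (ξ : Fin (n+1) → ℕ) :
    Finset.univ.image ξ = insert (ξ (Fin.last n)) (Finset.univ.image (ξ ∘ Fin.castSucc)) := by
  ext v
  simp only [Finset.mem_image, Finset.mem_univ, true_and, Finset.mem_insert, Function.comp]
  constructor
  · rintro ⟨l, rfl⟩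
    rcases Fin.eq_castSucc_or_eq_last l with ⟨m, rfl⟩ | rfl
    · exact Or.inr ⟨m, rfl⟩
    · exact Or.inl rfl
  · rintro (rfl | ⟨m, rfl⟩)
    exacts [⟨Fin.last n, rfl⟩, ⟨m.castSucc, rfl⟩]

lemma Yzeros {n : ℕ} (ξ : Fin (n+1) → ℕ) :
    (Finset.univ.filter fun l => ξ l = 0).card =
      (Finset.univ.filter fun l => (ξ ∘ Fin.castSucc) l = 0).card
        + (if ξ (Fin.last n) = 0 then 1 else 0) := by
  classical
  rw [Finset.card_filter, Finset.card_filter, Fin.sum_univ_castSucc]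
  simp [Function.comp]

lemma Ystep {n : ℕ} (ξ : Fin (n+1) → ℕ) :
    YcountFin ξ = YcountFin (ξ ∘ Fin.castSucc) ∨
      YcountFin ξ = YcountFin (ξ ∘ Fin.castSucc) + 1 := by
  classical
  unfold YcountFin
  rw [Yzeros, Yimage]
  rcases Nat.eq_zero_or_pos (ξ (Fin.last n)) with h0 | hpos
  · rw [h0, if_pos rfl, Finset.erase_insert_eq_erase]
    right; omega
  · rw [if_neg (by omega), Finset.erase_insert_of_ne (by omega)]
    by_cases hmem : ξ (Fin.last n) ∈ (Finset.univ.image (ξ ∘ Fin.castSucc)).erase 0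
    · rw [Finset.insert_eq_self.2 hmem]; left; omega
    · rw [Finset.card_insert_of_notMem hmem]; right; omega

lemma Ystep_le {n : ℕ} (ξ : Fin (n+1) → ℕ) : YcountFin (ξ ∘ Fin.castSucc) ≤ YcountFin ξ :=
  Ymono _ (Fin.castSucc_injective n) ξ

lemma Ypos {n : ℕ} (hn : 1 ≤ n) (ξ : Fin n → ℕ) : 1 ≤ YcountFin ξ := by
  classical
  unfold YcountFin
  by_contra h
  push_neg at h
  have h1 : (Finset.univ.filter fun l => ξ l = 0).card = 0 := by omega
  have h2 : ((Finset.univ.image ξ).erase 0).card = 0 := by omega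
  rw [Finset.card_eq_zero, Finset.filter_eq_empty_iff] at h1
  rw [Finset.card_eq_zero] at h2
  set l0 : Fin n := ⟨0, hn⟩
  have hne : ξ l0 ≠ 0 := h1 (Finset.mem_univ l0)
  have : ξ l0 ∈ (Finset.univ.image ξ).erase 0 :=
    Finset.mem_erase.2 ⟨hne, Finset.mem_image_of_mem ξ (Finset.mem_univ l0)⟩
  rw [h2] at this
  exact absurd this (Finset.notMem_empty _)

lemma YleOfRange {n j : ℕ} (ξ : Fin n → ℕ) (h : ∀ l, 1 ≤ ξ l ∧ ξ l ≤ j) :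
    YcountFin ξ ≤ j := by
  classical
  unfold YcountFin
  have h1 : (Finset.univ.filter fun l => ξ l = 0) = ∅ := by
    rw [Finset.filter_eq_empty_iff]; intro l _; have := h l; omega
  have h2 : (Finset.univ.image ξ).erase 0 ⊆ Finset.Icc 1 j := by
    intro v hv
    rw [Finset.mem_erase] at hv
    obtain ⟨_, hv2⟩ := hv
    simp only [Finset.mem_image, Finset.mem_univ, true_and] at hv2
    obtain ⟨l, rfl⟩ := hv2
    simpa [Finset.mem_Icc] using h l
  calc _ = ((Finset.univ.image ξ).erase 0).card := by rw [h1]; simp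
    _ ≤ (Finset.Icc 1 j).card := Finset.card_le_card h2
    _ = j := by rw [Nat.card_Icc]; omega

lemma Yzeroblock (j : ℕ) : YcountFin (fun _ : Fin (j+1) => 0) = j + 1 := by
  classical
  unfold YcountFin
  have himg : (Finset.univ.image fun _ : Fin (j+1) => 0).erase 0 = ∅ := by
    apply Finset.eq_empty_of_forall_notMem
    intro v hv
    rw [Finset.mem_erase] at hv
    obtain ⟨h1, h2⟩ := hv
    simp only [Finset.mem_image, Finset.mem_univ, true_and] at h2
    obtain ⟨_, rfl⟩ := h2
    exact h1 rfl
  rw [himg]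
  simp

lemma Ysuccblock (j : ℕ) : YcountFin (fun t : Fin (j+1) => (t : ℕ) + 1) = j + 1 := by
  classical
  unfold YcountFin
  have hinj : Function.Injective (fun t : Fin (j+1) => (t : ℕ) + 1) := by
    intro a b hab
    simp only at hab
    exact Fin.ext (by omega)
  have h1 : (Finset.univ.filter fun l : Fin (j+1) => (l : ℕ) + 1 = 0) = ∅ := by
    rw [Finset.filter_eq_empty_iff]; intro l _; omega
  have h2 : (0 : ℕ) ∉ Finset.univ.image fun t : Fin (j+1) => (t : ℕ) + 1 := by
    simp
  rw [h1, Finset.erase_eq_of_notMem h2, Finset.card_image_of_injective _ hinj]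
  simp

/-! #### Sums of weights -/

open Classical in
noncomputable def SumW (x : ℕ → ℝ) (n : ℕ) (P : (Fin n → ℕ) → Prop) : ENNReal :=
  ∑' ξ : Fin n → ℕ, if P ξ then Wgt x n ξ else 0

variable {x : ℕ → ℝ}

lemma tsum_wgt (hx : MemDelta x) : ∑' r : ℕ, wgt x r = 1 := by
  obtain ⟨hnn, -, hsum, hle⟩ := hx
  rw [tsum_eq_zero_add' ENNReal.summable]
  have h1 : ∑' n : ℕ, wgt x (n + 1) = ENNReal.ofReal (∑' n : ℕ, x (n + 1)) := by
    rw [ENNReal.ofReal_tsum_of_nonneg (fun n => hnn (n+1) (by omega)) hsum]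
    exact tsum_congr fun n => wgt_succ x n
  rw [h1, wgt_zero,
    ← ENNReal.ofReal_add (by linarith) (tsum_nonneg fun n => hnn (n+1) (by omega))]
  norm_num

lemma Wgt_snoc (x : ℕ → ℝ) (n : ℕ) (η : Fin n → ℕ) (r : ℕ) :
    Wgt x (n+1) (Fin.snoc η r) = Wgt x n η * wgt x r := by
  unfold Wgt
  rw [Fin.prod_univ_castSucc]
  simp

lemma tsum_snoc (n : ℕ) (g : (Fin (n+1) → ℕ) → ENNReal) :
    ∑' ξ : Fin (n+1) → ℕ, g ξ = ∑' η : Fin n → ℕ, ∑' r : ℕ, g (Fin.snoc η r) := by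
  rw [← ENNReal.tsum_prod,
    ← Equiv.tsum_eq ((Equiv.prodComm (Fin n → ℕ) ℕ).trans (Fin.snocEquiv (fun _ => ℕ))) g]
  exact tsum_congr fun p => by simp [Fin.snocEquiv]

lemma snoc_cast (n : ℕ) (η : Fin n → ℕ) (r : ℕ) :
    (Fin.snoc η r : Fin (n+1) → ℕ) ∘ Fin.castSucc = η := by
  funext l; simp [Fin.snoc_castSucc]

open Classical in
lemma SumW_marg (hx : MemDelta x) (n : ℕ) (P : (Fin n → ℕ) → Prop) :
    SumW x (n+1) (fun ξ => P (ξ ∘ Fin.castSucc)) = SumW x n P := by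
  unfold SumW
  rw [tsum_snoc]
  refine tsum_congr fun η => ?_
  have : ∀ r : ℕ, (if P ((Fin.snoc η r : Fin (n+1) → ℕ) ∘ Fin.castSucc)
      then Wgt x (n+1) (Fin.snoc η r) else 0)
      = (if P η then Wgt x n η else 0) * wgt x r := by
    intro r
    rw [snoc_cast, Wgt_snoc]
    by_cases h : P η <;> simp [h]
  rw [tsum_congr this, ENNReal.tsum_mul_left, tsum_wgt hx, mul_one]

lemma SumW_total (hx : MemDelta x) (n : ℕ) : SumW x n (fun _ => True) = 1 := by
  induction n with
  | zero =>
    unfold SumW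
    rw [tsum_eq_single (fun l => l.elim0)
      (by intro ξ hξ; exfalso; exact hξ (funext fun l => l.elim0))]
    simp [Wgt]
  | succ n ih => exact (SumW_marg hx n (fun _ => True)).trans ih

lemma SumW_le (x : ℕ → ℝ) (n : ℕ) {P Q : (Fin n → ℕ) → Prop} (h : ∀ ξ, P ξ → Q ξ) :
    SumW x n P ≤ SumW x n Q := by
  classical
  apply ENNReal.tsum_le_tsum
  intro ξ
  by_cases hP : P ξ
  · simp [hP, h ξ hP]
  · simp [hP]

lemma SumW_le_one (hx : MemDelta x) (n : ℕ) (P : (Fin n → ℕ) → Prop) : SumW x n P ≤ 1 :=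
  (SumW_le x n fun _ _ => trivial).trans (SumW_total hx n).le

open Classical in
lemma SumW_add (x : ℕ → ℝ) (n : ℕ) {P Q R : (Fin n → ℕ) → Prop}
    (h : ∀ ξ, (R ξ ↔ P ξ ∨ Q ξ)) (hd : ∀ ξ, P ξ → Q ξ → False) :
    SumW x n R = SumW x n P + SumW x n Q := by
  unfold SumW
  rw [← ENNReal.tsum_add]
  refine tsum_congr fun ξ => ?_
  by_cases hP : P ξ <;> by_cases hQ : Q ξ
  · exact absurd (hd ξ hP hQ) not_false
  all_goals simp [hP, hQ, h ξ]

open Classical in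
lemma SumW_factor (x : ℕ → ℝ) (n m : ℕ) (P : (Fin n → ℕ) → Prop) (Q : (Fin m → ℕ) → Prop) :
    SumW x (n+m) (fun ξ => P (fun l => ξ (Fin.castAdd m l)) ∧ Q (fun l => ξ (Fin.natAdd n l)))
      = SumW x n P * SumW x m Q := by
  unfold SumW
  rw [← ENNReal.tsum_mul_right]
  simp_rw [← ENNReal.tsum_mul_left]
  rw [← ENNReal.tsum_prod, ← (Fin.appendEquiv n m).tsum_eq]
  refine tsum_congr fun c => ?_
  have hP : (fun l => Fin.appendEquiv n m c (Fin.castAdd m l)) = c.1 := by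
    funext l; simp [Fin.appendEquiv, Fin.append_left]
  have hQ : (fun l => Fin.appendEquiv n m c (Fin.natAdd n l)) = c.2 := by
    funext l; simp [Fin.appendEquiv, Fin.append_right]
  have hW : Wgt x (n+m) (Fin.appendEquiv n m c) = Wgt x n c.1 * Wgt x m c.2 := by
    unfold Wgt
    rw [Fin.prod_univ_add]
    simp [Fin.appendEquiv, Fin.append_left, Fin.append_right]
  simp only [hP, hQ, hW]
  by_cases h1 : P c.1 <;> by_cases h2 : Q c.2 <;> simp [h1, h2]

open Classical in
lemma SumW_single (x : ℕ → ℝ) (n : ℕ) (β : Fin n → ℕ) :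
    SumW x n (fun ξ => ξ = β) = Wgt x n β := by
  unfold SumW
  rw [tsum_eq_single β (by intro ξ hξ; simp [hξ])]
  simp

open Classical in
lemma SumW_compl_single (hx : MemDelta x) (n : ℕ) (β : Fin n → ℕ) :
    Wgt x n β + SumW x n (fun ξ => ξ ≠ β) = 1 := by
  have h := SumW_add x n (R := fun _ => True) (P := fun ξ => ξ = β) (Q := fun ξ => ξ ≠ β)
    (fun ξ => by tauto) (fun ξ h1 h2 => h2 h1)
  rw [SumW_total hx, SumW_single] at h
  exact h.symm

/-! #### The functions `A` and `B` -/

noncomputable def Afun (x : ℕ → ℝ) (j n : ℕ) : ENNReal :=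
  SumW x n (fun ξ => YcountFin ξ ≤ j)

noncomputable def Bfun (x : ℕ → ℝ) (j n : ℕ) : ENNReal :=
  SumW x (n+1) (fun ξ => YcountFin (ξ ∘ Fin.castSucc) = j ∧ YcountFin ξ = j + 1)

lemma Afun_step (hx : MemDelta x) (j n : ℕ) :
    Afun x j n = Afun x j (n+1) + Bfun x j n := by
  have h1 : SumW x (n+1) (fun ξ => YcountFin (ξ ∘ Fin.castSucc) ≤ j) = Afun x j n :=
    SumW_marg hx n (fun η => YcountFin η ≤ j)
  rw [← h1]
  apply SumW_add
  · intro ξ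
    rcases Ystep ξ with h | h <;> constructor <;> intro hh
    · left; omega
    · rcases hh with hh | hh
      · omega
      · omega
    · by_cases hY : YcountFin ξ ≤ j
      · left; exact hY
      · right; constructor <;> omega
    · rcases hh with hh | hh
      · have := Ystep_le ξ; omega
      · omega
  · intro ξ h1 h2
    omega

lemma Afun_tele (hx : MemDelta x) (i j : ℕ) (M : ℕ) :
    Afun x j i = (∑ m ∈ Finset.range M, Bfun x j (i+m)) + Afun x j (i+M) := by
  induction M with
  | zero => simp
  | succ M ih =>
    rw [ih, Finset.sum_range_succ, Afun_step hx j (i+M)]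
    ring_nf

lemma Afun_limit (hx : MemDelta x) (i j : ℕ) :
    Afun x j i = (∑' m : ℕ, Bfun x j (i+m)) + ⨅ M : ℕ, Afun x j (i+M) := by
  apply le_antisymm
  · have h1 : ∀ M : ℕ, Afun x j i ≤ Afun x j (i+M) + ∑' m : ℕ, Bfun x j (i+m) := by
      intro M
      rw [Afun_tele hx i j M, add_comm]
      gcongr
      exact ENNReal.sum_le_tsum _
    calc Afun x j i ≤ ⨅ M : ℕ, (Afun x j (i+M) + ∑' m : ℕ, Bfun x j (i+m)) := le_iInf h1
      _ = (⨅ M : ℕ, Afun x j (i+M)) + ∑' m : ℕ, Bfun x j (i+m) := by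
        rw [ENNReal.iInf_add]
      _ = _ := add_comm _ _
  · rw [ENNReal.tsum_eq_iSup_nat, ENNReal.iSup_add]
    apply iSup_le
    intro M
    calc (∑ m ∈ Finset.range M, Bfun x j (i+m)) + ⨅ M : ℕ, Afun x j (i+M)
        ≤ (∑ m ∈ Finset.range M, Bfun x j (i+m)) + Afun x j (i+M) := by
          gcongr; exact iInf_le _ M
      _ = Afun x j i := (Afun_tele hx i j M).symm

/-! #### The tail -/

lemma partial_sum_eq (x : ℕ → ℝ) (j : ℕ) :
    ∑ r ∈ Finset.Icc 1 j, x r = ∑ k ∈ Finset.range j, x (k+1) := by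
  induction j with
  | zero => simp
  | succ j ih =>
    rw [Finset.sum_range_succ, ← ih, Finset.sum_Icc_succ_top (by omega)]

lemma tail_of_eq (hx : MemDelta x) {j : ℕ}
    (hsum1 : ∑ r ∈ Finset.Icc 1 j, x r = 1) (n : ℕ) : Afun x j n = 1 := by
  classical
  obtain ⟨hnn, hmono, hsum, hle⟩ := hx
  have hps : ∑ k ∈ Finset.range j, x (k+1) = 1 := by rw [← partial_sum_eq]; exact hsum1
  have hts : ∑' n : ℕ, x (n+1) = 1 := by
    have h1 : (1:ℝ) ≤ ∑' n : ℕ, x (n+1) := by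
      rw [← hps]
      exact Summable.sum_le_tsum _ (fun k _ => hnn (k+1) (by omega)) hsum
    linarith
  have htail0 : ∀ r : ℕ, j + 1 ≤ r → x r = 0 := by
    intro r hr
    have hsplit := Summable.sum_add_tsum_nat_add (f := fun n => x (n+1)) j hsum
    rw [hps, hts] at hsplit
    have htail : ∑' k : ℕ, x (k + 1 + j) = 0 := by
      have : ∀ k : ℕ, x (k + j + 1) = x (k + 1 + j) := fun k => by ring_nf
      rw [← tsum_congr this]
      linarith
    have hsumtail : Summable (fun k : ℕ => x (k + 1 + j)) := by
      have := (summable_nat_add_iff (f := fun n => x (n+1)) j).2 hsum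
      exact this.congr fun k => by ring_nf
    have hterm : x (r - j - 1 + 1 + j) ≤ 0 := by
      rw [← htail]
      exact Summable.le_tsum hsumtail _ (fun b _ => hnn (b + 1 + j) (by omega))
    have hterm' : x r ≤ 0 := by
      rw [show r - j - 1 + 1 + j = r by omega] at hterm
      exact hterm
    exact le_antisymm hterm' (hnn r (by omega))
  have hW0 : ∀ (m : ℕ) (ξ : Fin m → ℕ), ¬(YcountFin ξ ≤ j) → Wgt x m ξ = 0 := by
    intro m ξ hY
    by_cases hall : ∀ l, 1 ≤ ξ l ∧ ξ l ≤ j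
    · exact absurd (YleOfRange ξ hall) hY
    · push_neg at hall
      obtain ⟨l, hl⟩ := hall
      apply Finset.prod_eq_zero (Finset.mem_univ l)
      rcases Nat.eq_zero_or_pos (ξ l) with h0 | hpos
      · rw [h0, wgt_zero, hts]
        simp
      · have : j + 1 ≤ ξ l := by
          rcases Nat.lt_or_ge (ξ l) (j+1) with h | h
          · exact absurd (hl (by omega)) (by omega)
          · exact h
        obtain ⟨r, hr⟩ : ∃ r, ξ l = r + 1 := ⟨ξ l - 1, by omega⟩
        rw [hr, wgt_succ, htail0 (r+1) (by omega)]
        simp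
  have : Afun x j n = SumW x n (fun _ => True) := by
    unfold Afun SumW
    refine tsum_congr fun ξ => ?_
    by_cases hY : YcountFin ξ ≤ j
    · simp [hY]
    · simp [hY, hW0 n ξ hY]
  rw [this]
  exact SumW_total ⟨hnn, hmono, hsum, hle⟩ n

lemma tail_of_lt (hx : MemDelta x) {j : ℕ}
    (hsum1 : ∑ r ∈ Finset.Icc 1 j, x r < 1) (i : ℕ) : (⨅ M : ℕ, Afun x j (i+M)) = 0 := by
  classical
  obtain ⟨hnn, hmono, hsum, hle⟩ := hx
  have hx' : MemDelta x := ⟨hnn, hmono, hsum, hle⟩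
  -- a block β₀ of length j+1 with positive weight forcing the count above j
  obtain ⟨β₀, hYβ, hδpos⟩ :
      ∃ β₀ : Fin (j+1) → ℕ, YcountFin β₀ = j + 1 ∧ Wgt x (j+1) β₀ ≠ 0 := by
    by_cases hz : ∑' n : ℕ, x (n+1) < 1
    · refine ⟨fun _ => 0, Yzeroblock j, ?_⟩
      unfold Wgt
      rw [Finset.prod_const]
      apply pow_ne_zero
      rw [wgt_zero]
      simp only [ne_eq, ENNReal.ofReal_eq_zero, not_le]
      linarith
    · push_neg at hz
      have hts : ∑' n : ℕ, x (n+1) = 1 := le_antisymm hle hz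
      -- then the tail beyond j has positive sum, so x (j+1) > 0 by monotonicity
      have hps : ∑ k ∈ Finset.range j, x (k+1) < 1 := by
        rw [← partial_sum_eq]; exact hsum1
      have hsplit := Summable.sum_add_tsum_nat_add (f := fun n => x (n+1)) j hsum
      rw [hts] at hsplit
      have hsumtail : Summable (fun k : ℕ => x (k + j + 1)) :=
        (summable_nat_add_iff (f := fun n => x (n+1)) j).2 hsum
      have htailpos : 0 < ∑' k : ℕ, x (k + j + 1) := by
        linarith
      obtain ⟨k, hk⟩ : ∃ k : ℕ, 0 < x (k + j + 1) := by
        by_contra hcon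
        push_neg at hcon
        have : ∑' k : ℕ, x (k + j + 1) ≤ 0 := tsum_nonpos hcon
        linarith
      have hmono' : ∀ a b : ℕ, 1 ≤ a → a ≤ b → x b ≤ x a := by
        intro a b ha hab
        induction b with
        | zero => omega
        | succ b ihb =>
          rcases Nat.lt_or_ge a (b+1) with h | h
          · exact le_trans (hmono b (by omega)) (ihb (by omega))
          · have : a = b + 1 := by omega
            rw [this]
      have hj1 : 0 < x (j+1) := lt_of_lt_of_le hk (hmono' (j+1) (k+j+1) (by omega) (by omega))
      refine ⟨fun t => (t : ℕ) + 1, Ysuccblock j, ?_⟩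
      unfold Wgt
      rw [Finset.prod_ne_zero_iff]
      intro t _
      rw [wgt_succ]
      simp only [ne_eq, ENNReal.ofReal_eq_zero, not_le]
      have : 0 < x ((t : ℕ) + 1) :=
        lt_of_lt_of_le hj1 (hmono' ((t:ℕ)+1) (j+1) (by omega) (by have := t.isLt; omega))
      exact this
  set δ := Wgt x (j+1) β₀ with hδdef
  set S := SumW x (j+1) (fun β => β ≠ β₀) with hSdef
  have hδS : δ + S = 1 := SumW_compl_single hx' (j+1) β₀
  have hSlt : S < 1 := by
    rcases lt_or_ge S 1 with h | h
    · exact h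
    · exfalso
      have hS1 : S = 1 := le_antisymm (SumW_le_one hx' _ _) h
      rw [hS1] at hδS
      have h1 : δ + 1 - 1 = 1 - 1 := by rw [hδS]
      rw [ENNReal.add_sub_cancel_right (by norm_num : (1:ENNReal) ≠ ⊤), tsub_self] at h1
      exact hδpos h1
  have castAdd_inj : ∀ n : ℕ,
      Function.Injective (Fin.castAdd (j+1) : Fin n → Fin (n + (j+1))) := by
    intro n a b hab
    exact Fin.ext (by simpa using congrArg Fin.val hab)
  have natAdd_inj : ∀ n : ℕ, Function.Injective (Fin.natAdd n : Fin (j+1) → Fin (n + (j+1))) := by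
    intro n a b hab
    have := congrArg Fin.val hab
    simp only [Fin.coe_natAdd] at this
    exact Fin.ext (by omega)
  have hstep : ∀ n, Afun x j (n + (j+1)) ≤ Afun x j n * S := by
    intro n
    have hle1 : Afun x j (n + (j+1)) ≤ SumW x (n + (j+1))
        (fun ξ => (YcountFin (fun l => ξ (Fin.castAdd (j+1) l)) ≤ j)
          ∧ ¬((fun l => ξ (Fin.natAdd n l)) = β₀)) := by
      apply SumW_le
      intro ξ hY
      constructor
      · exact le_trans (Ymono (Fin.castAdd (j+1)) (castAdd_inj n) ξ) hY
      · intro hEq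
        have h2 : YcountFin (fun l => ξ (Fin.natAdd n l)) ≤ YcountFin ξ :=
          Ymono _ (natAdd_inj n) ξ
        rw [hEq, hYβ] at h2
        omega
    exact le_trans hle1 (le_of_eq (SumW_factor x n (j+1) (fun η => YcountFin η ≤ j)
      (fun β => ¬ β = β₀)))
  have hiter : ∀ M : ℕ, Afun x j (i + (j+1)*M) ≤ S ^ M := by
    intro M
    induction M with
    | zero => simpa [Afun] using SumW_le_one hx' i _
    | succ M ih =>
      have harr : i + (j+1)*(M+1) = (i + (j+1)*M) + (j+1) := by ring
      rw [harr, pow_succ]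
      exact le_trans (hstep _) (mul_le_mul' ih le_rfl)
  have hpow : Filter.Tendsto (fun M : ℕ => S ^ M) Filter.atTop (nhds 0) :=
    ENNReal.tendsto_pow_atTop_nhds_zero_of_lt_one hSlt
  have hle0 : (⨅ M : ℕ, Afun x j (i+M)) ≤ 0 := by
    apply ge_of_tendsto hpow
    filter_upwards with M
    exact le_trans (iInf_le _ ((j+1)*M)) (hiter M)
  exact le_antisymm hle0 zero_le

/-! #### The pointwise identity on `Δ` -/

open Classical in
lemma sumYeq (hx : MemDelta x) {i j : ℕ} (hi : 1 ≤ i) :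
    ∑ k ∈ Finset.Icc 1 j, SumW x i (fun ξ => YcountFin ξ = k) = Afun x j i := by
  unfold SumW Afun
  rw [← Summable.tsum_finsetSum (fun k _ => ENNReal.summable)]
  refine tsum_congr fun ξ => ?_
  beta_reduce
  have hpos := Ypos hi ξ
  by_cases hY : YcountFin ξ ≤ j
  · rw [if_pos hY]
    refine (Finset.sum_eq_single_of_mem (YcountFin ξ) (Finset.mem_Icc.2 ⟨hpos, hY⟩) ?_).trans ?_
    · intro b _ hb
      exact if_neg fun h => hb h.symm
    · exact if_pos rfl
  · rw [if_neg hY]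
    refine Finset.sum_eq_zero fun b hb => ?_
    exact if_neg fun h => hY (le_trans (le_of_eq h) (Finset.mem_Icc.1 hb).2)

lemma partial_le_one (hx : MemDelta x) (j : ℕ) : ∑ r ∈ Finset.Icc 1 j, x r ≤ 1 := by
  obtain ⟨hnn, -, hsum, hle⟩ := hx
  rw [partial_sum_eq]
  exact le_trans (Summable.sum_le_tsum _ (fun k _ => hnn (k+1) (by omega)) hsum) hle

open Classical in
lemma pointwise_main (hx : MemDelta x) {i j : ℕ} (hi : 1 ≤ i) :
    ∑ k ∈ Finset.Icc 1 j, SumW x i (fun ξ => YcountFin ξ = k)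
      = (if ∑ r ∈ Finset.Icc 1 j, x r = 1 then 1 else 0)
        + ∑' m : ℕ, Bfun x j (i+m) := by
  rw [sumYeq hx hi, Afun_limit hx i j, add_comm]
  congr 1
  by_cases hsum1 : ∑ r ∈ Finset.Icc 1 j, x r = 1
  · rw [if_pos hsum1]
    have : ∀ M : ℕ, Afun x j (i+M) = 1 := fun M => tail_of_eq hx hsum1 (i+M)
    simp [this]
  · rw [if_neg hsum1]
    exact tail_of_lt hx (lt_of_le_of_ne (partial_le_one hx j) hsum1) i

/-! #### Bridging to the product measures -/

open Classical in
lemma probYeq_eq (x : ℕ → ℝ) (i k : ℕ) :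
    probYeq x i k = SumW x i (fun ξ => YcountFin ξ = k) := by
  unfold probYeq SumW
  rw [pi_apply]
  refine tsum_congr fun ξ => ?_
  by_cases h : YcountFin ξ = k <;> simp [Set.indicator_apply, h]

open Classical in
lemma probYpair_eq (x : ℕ → ℝ) (k j : ℕ) : probYpair x k j = Bfun x j k := by
  unfold probYpair Bfun SumW
  rw [pi_apply]
  refine tsum_congr fun ξ => ?_
  by_cases h : YcountFin (ξ ∘ Fin.castSucc) = j ∧ YcountFin ξ = j + 1 <;>
    simp [Set.indicator_apply, h]

/-! #### Measurable versions -/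

noncomputable def wgtM (x : ℕ → ℝ) : ℕ → ENNReal
  | 0 => 1 - ∑' n : ℕ, ENNReal.ofReal (x (n+1))
  | (r+1) => ENNReal.ofReal (x (r+1))

open Classical in
noncomputable def SumWM (x : ℕ → ℝ) (n : ℕ) (P : (Fin n → ℕ) → Prop) : ENNReal :=
  ∑' ξ : Fin n → ℕ, if P ξ then (∏ l, wgtM x (ξ l)) else 0

lemma meas_wgtM (r : ℕ) : Measurable fun x : ℕ → ℝ => wgtM x r := by
  cases r with
  | zero =>
    show Measurable fun x : ℕ → ℝ => 1 - ∑' n : ℕ, ENNReal.ofReal (x (n+1))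
    apply Measurable.const_sub
    exact Measurable.ennreal_tsum fun n =>
      ENNReal.measurable_ofReal.comp (measurable_pi_apply (n+1))
  | succ r =>
    exact ENNReal.measurable_ofReal.comp (measurable_pi_apply (r+1))

open Classical in
lemma meas_SumWM (n : ℕ) (P : (Fin n → ℕ) → Prop) :
    Measurable fun x : ℕ → ℝ => SumWM x n P := by
  apply Measurable.ennreal_tsum
  intro ξ
  by_cases h : P ξ
  · simpa [h] using Finset.measurable_prod Finset.univ
      (fun l _ => (meas_wgtM (ξ l) : Measurable fun x : ℕ → ℝ => wgtM x (ξ l)))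
  · simp [h]

lemma wgtM_eq (hx : MemDelta x) (r : ℕ) : wgtM x r = wgt x r := by
  obtain ⟨hnn, -, hsum, hle⟩ := hx
  cases r with
  | zero =>
    show 1 - ∑' n : ℕ, ENNReal.ofReal (x (n+1)) = wgt x 0
    rw [wgt_zero, ← ENNReal.ofReal_tsum_of_nonneg (fun n => hnn (n+1) (by omega)) hsum,
      ENNReal.ofReal_sub 1 (tsum_nonneg fun n => hnn (n+1) (by omega))]
    norm_num
  | succ r => rfl

open Classical in
lemma SumWM_eq (hx : MemDelta x) (n : ℕ) (P : (Fin n → ℕ) → Prop) :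
    SumWM x n P = SumW x n P := by
  unfold SumWM SumW Wgt
  refine tsum_congr fun ξ => ?_
  have : (∏ l, wgtM x (ξ l)) = ∏ l, wgt x (ξ l) :=
    Finset.prod_congr rfl fun l _ => wgtM_eq hx (ξ l)
  rw [this]

/-! #### Measurability of the relevant sets -/

lemma measurableSet_memDelta : MeasurableSet {x : ℕ → ℝ | MemDelta x} := by
  have hset : {x : ℕ → ℝ | MemDelta x}
      = (⋂ r : ℕ, {x : ℕ → ℝ | 1 ≤ r → 0 ≤ x r}) ∩
        ((⋂ r : ℕ, {x : ℕ → ℝ | 1 ≤ r → x (r+1) ≤ x r}) ∩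
          (⋂ n : ℕ, {x : ℕ → ℝ | ∑ k ∈ Finset.range n, x (k+1) ≤ 1})) := by
    ext x
    simp only [Set.mem_setOf_eq, Set.mem_inter_iff, Set.mem_iInter]
    constructor
    · rintro ⟨hnn, hmono, hsum, hle⟩
      refine ⟨fun r hr => hnn r hr, fun r hr => hmono r hr, fun n => ?_⟩
      exact le_trans (Summable.sum_le_tsum _ (fun k _ => hnn (k+1) (by omega)) hsum) hle
    · rintro ⟨hnn, hmono, hbdd⟩
      have hnn' : ∀ k : ℕ, 0 ≤ x (k+1) := fun k => hnn (k+1) (by omega)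
      have hsum : Summable (fun k : ℕ => x (k+1)) := summable_of_sum_range_le hnn' hbdd
      exact ⟨hnn, hmono, hsum, Summable.tsum_le_of_sum_range_le hsum hbdd⟩
  rw [hset]
  have m1 : ∀ r : ℕ, MeasurableSet {x : ℕ → ℝ | 1 ≤ r → 0 ≤ x r} := by
    intro r
    by_cases hr : 1 ≤ r
    · have : {x : ℕ → ℝ | 1 ≤ r → 0 ≤ x r} = {x : ℕ → ℝ | 0 ≤ x r} := by ext x; simp [hr]
      rw [this]
      exact measurableSet_le measurable_const (measurable_pi_apply r)
    · have : {x : ℕ → ℝ | 1 ≤ r → 0 ≤ x r} = Set.univ := by ext x; simp [hr]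
      rw [this]
      exact MeasurableSet.univ
  have m2 : ∀ r : ℕ, MeasurableSet {x : ℕ → ℝ | 1 ≤ r → x (r+1) ≤ x r} := by
    intro r
    by_cases hr : 1 ≤ r
    · have : {x : ℕ → ℝ | 1 ≤ r → x (r+1) ≤ x r} = {x : ℕ → ℝ | x (r+1) ≤ x r} := by
        ext x; simp [hr]
      rw [this]
      exact measurableSet_le (measurable_pi_apply (r+1)) (measurable_pi_apply r)
    · have : {x : ℕ → ℝ | 1 ≤ r → x (r+1) ≤ x r} = Set.univ := by ext x; simp [hr]
      rw [this]
      exact MeasurableSet.univ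
  have m3 : ∀ n : ℕ, MeasurableSet {x : ℕ → ℝ | ∑ k ∈ Finset.range n, x (k+1) ≤ 1} :=
    fun n => measurableSet_le
      (Finset.measurable_sum (Finset.range n) fun k _ => measurable_pi_apply (k+1))
      measurable_const
  exact ((MeasurableSet.iInter m1).inter
    ((MeasurableSet.iInter m2).inter (MeasurableSet.iInter m3)))

lemma measurableSet_sumEq (j : ℕ) :
    MeasurableSet {x : ℕ → ℝ | ∑ r ∈ Finset.Icc 1 j, x r = 1} := by
  have hm : Measurable fun x : ℕ → ℝ => ∑ r ∈ Finset.Icc 1 j, x r :=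
    Finset.measurable_sum (Finset.Icc 1 j) fun r _ => measurable_pi_apply r
  exact hm (measurableSet_singleton 1)

end Aux

/-- Siegmund duality of the rates. -/
theorem statement7 (c : ℝ) (hc : 0 ≤ c) (ν : Measure (ℕ → ℝ))
    (i j : ℕ) (hj : 1 ≤ j) (hji : j < i) :
    (∑ k ∈ Finset.Icc 1 j,
        (ENNReal.ofReal c * (Nat.choose i 2 : ENNReal) * (if k = i - 1 then 1 else 0) +
          ∫⁻ x in {x | MemDelta x}, probYeq x i k ∂ν)) =
      ν {x | MemDelta x ∧ ∑ r ∈ Finset.Icc 1 j, x r = 1} +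
        ∑' m : ℕ,
          (ENNReal.ofReal c * (Nat.choose (i + m) 2 : ENNReal) *
              (if i + m = j + 1 then 1 else 0) +
            ∫⁻ x in {x | MemDelta x}, probYpair x (i + m) j ∂ν) := by
  classical
  have hi1 : 1 ≤ i := le_trans hj (le_of_lt hji)
  have hDm : MeasurableSet {x : ℕ → ℝ | MemDelta x} := measurableSet_memDelta
  have hEm : MeasurableSet {x : ℕ → ℝ | ∑ r ∈ Finset.Icc 1 j, x r = 1} := measurableSet_sumEq j
  rw [Finset.sum_add_distrib, ENNReal.tsum_add]
  -- the `c`-terms agree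
  have hcterm : (∑ k ∈ Finset.Icc 1 j,
        ENNReal.ofReal c * (Nat.choose i 2 : ENNReal) * (if k = i - 1 then 1 else 0))
      = ∑' m : ℕ, ENNReal.ofReal c * (Nat.choose (i + m) 2 : ENNReal) *
          (if i + m = j + 1 then 1 else 0) := by
    by_cases hij : i = j + 1
    · rw [tsum_eq_single 0 (fun m hm => by rw [if_neg (by omega), mul_zero]),
        Finset.sum_eq_single_of_mem (i-1) (Finset.mem_Icc.2 ⟨by omega, by omega⟩)
          (fun b _ hb => by rw [if_neg hb, mul_zero])]
      simp [hij]
    · rw [Finset.sum_eq_zero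
          (fun k hk => by
            rw [if_neg (by have := Finset.mem_Icc.1 hk; omega), mul_zero]),
        tsum_congr (fun m => by rw [if_neg (by omega), mul_zero]), tsum_zero]
  -- the integral terms
  have hmeasEq : ∀ k : ℕ,
      Measurable fun x : ℕ → ℝ => SumWM x i (fun ξ => YcountFin ξ = k) :=
    fun k => meas_SumWM i _
  have hmeasPair : ∀ m : ℕ,
      Measurable fun x : ℕ → ℝ => SumWM x (i+m+1)
        (fun ξ => YcountFin (ξ ∘ Fin.castSucc) = j ∧ YcountFin ξ = j + 1) :=
    fun m => meas_SumWM _ _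
  have heq1 : ∀ k : ℕ, (∫⁻ x in {x | MemDelta x}, probYeq x i k ∂ν)
      = ∫⁻ x in {x | MemDelta x}, SumWM x i (fun ξ => YcountFin ξ = k) ∂ν := by
    intro k
    apply setLIntegral_congr_fun hDm
    intro x hx
    beta_reduce
    rw [probYeq_eq, SumWM_eq hx]
  have heq2 : ∀ m : ℕ, (∫⁻ x in {x | MemDelta x}, probYpair x (i+m) j ∂ν)
      = ∫⁻ x in {x | MemDelta x}, SumWM x (i+m+1)
          (fun ξ => YcountFin (ξ ∘ Fin.castSucc) = j ∧ YcountFin ξ = j + 1) ∂ν := by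
    intro m
    apply setLIntegral_congr_fun hDm
    intro x hx
    beta_reduce
    rw [probYpair_eq, show Bfun x j (i+m) = SumW x (i+m+1)
      (fun ξ => YcountFin (ξ ∘ Fin.castSucc) = j ∧ YcountFin ξ = j + 1) from rfl,
      SumWM_eq hx]
  have hint : (∑ k ∈ Finset.Icc 1 j, ∫⁻ x in {x | MemDelta x}, probYeq x i k ∂ν)
      = ν {x | MemDelta x ∧ ∑ r ∈ Finset.Icc 1 j, x r = 1} +
          ∑' m : ℕ, ∫⁻ x in {x | MemDelta x}, probYpair x (i + m) j ∂ν := by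
    calc (∑ k ∈ Finset.Icc 1 j, ∫⁻ x in {x | MemDelta x}, probYeq x i k ∂ν)
        = ∑ k ∈ Finset.Icc 1 j,
            ∫⁻ x in {x | MemDelta x}, SumWM x i (fun ξ => YcountFin ξ = k) ∂ν :=
          Finset.sum_congr rfl fun k _ => heq1 k
      _ = ∫⁻ x in {x | MemDelta x},
            (∑ k ∈ Finset.Icc 1 j, SumWM x i (fun ξ => YcountFin ξ = k)) ∂ν :=
          (lintegral_finset_sum _ (fun k _ => hmeasEq k)).symm
      _ = ∫⁻ x in {x | MemDelta x},
            ({x : ℕ → ℝ | ∑ r ∈ Finset.Icc 1 j, x r = 1}.indicator 1 x +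
              ∑' m : ℕ, SumWM x (i+m+1)
                (fun ξ => YcountFin (ξ ∘ Fin.castSucc) = j ∧ YcountFin ξ = j + 1)) ∂ν := by
          apply setLIntegral_congr_fun hDm
          intro x hx
          calc (∑ k ∈ Finset.Icc 1 j, SumWM x i (fun ξ => YcountFin ξ = k))
              = ∑ k ∈ Finset.Icc 1 j, SumW x i (fun ξ => YcountFin ξ = k) :=
                Finset.sum_congr rfl fun k _ => SumWM_eq hx i _
            _ = (if ∑ r ∈ Finset.Icc 1 j, x r = 1 then 1 else 0)
                  + ∑' m : ℕ, Bfun x j (i+m) := pointwise_main hx hi1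
            _ = _ := by
                have h1 : (if ∑ r ∈ Finset.Icc 1 j, x r = 1 then (1:ENNReal) else 0)
                    = {x : ℕ → ℝ | ∑ r ∈ Finset.Icc 1 j, x r = 1}.indicator 1 x := by
                  by_cases hx1 : x ∈ {x : ℕ → ℝ | ∑ r ∈ Finset.Icc 1 j, x r = 1}
                  · rw [Set.indicator_of_mem hx1, Pi.one_apply]
                    exact if_pos hx1
                  · rw [Set.indicator_of_notMem hx1]
                    exact if_neg hx1
                have h2 : (∑' m : ℕ, Bfun x j (i+m))
                    = ∑' m : ℕ, SumWM x (i+m+1)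
                        (fun ξ => YcountFin (ξ ∘ Fin.castSucc) = j ∧ YcountFin ξ = j + 1) :=
                  tsum_congr fun m => (SumWM_eq hx (i+m+1) _).symm
                rw [h1, h2]
      _ = (∫⁻ x in {x | MemDelta x},
              {x : ℕ → ℝ | ∑ r ∈ Finset.Icc 1 j, x r = 1}.indicator 1 x ∂ν) +
            ∫⁻ x in {x | MemDelta x},
              (∑' m : ℕ, SumWM x (i+m+1)
                (fun ξ => YcountFin (ξ ∘ Fin.castSucc) = j ∧ YcountFin ξ = j + 1)) ∂ν :=
          lintegral_add_left (measurable_one.indicator hEm) _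
      _ = ν {x | MemDelta x ∧ ∑ r ∈ Finset.Icc 1 j, x r = 1} +
            ∑' m : ℕ, ∫⁻ x in {x | MemDelta x}, probYpair x (i + m) j ∂ν := by
          congr 1
          · rw [lintegral_indicator_one hEm, Measure.restrict_apply hEm]
            congr 1
            ext x
            simp [Set.mem_setOf_eq, and_comm]
          · rw [lintegral_tsum (fun m => (hmeasPair m).aemeasurable)]
            exact tsum_congr fun m => (heq2 m).symm
  rw [hcterm, hint]
  ring
end

section
/- Let a, b, r ∈ ℝ and t ∈ ℝ with t ∉ {0, a, 2a, 3a, …}. Define the generalized Stirling numbers S(i,j) := S(i,j;a,b,r) by S(0,0) = 1, S(i,j) = 0 whenever j < 0 or j > i, and the recursion S(i+1,j) = S(i,j−1) + (jb − ia + r)·S(i,j). For i, j ≥ 0 set q_{ij} := ((t−r|b)_j / (t|a)_i) · S(i,j), where (x|y)_n := Π_{k=0}^{n−1}(x − ky), and set q_{i,≤j} := Σ_{m=0}^{j} q_{im}. Fix j ≥ 0 and suppose the limit L := lim_{k→∞} q_{k,≤j} exists. Then for every i ≥ 0 the series Σ_{k=i}^{∞} ((t − r − jb)/(t − ka)) ·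 q_{kj} converges and q_{i,≤j} − L = Σ_{k=i}^{∞} ((t − r − jb)/(t − ka)) · q_{kj}. -/
/-- the generalized Stirling numbers `S(i,j; a,b,r)` of Hsu and Shiue, defined by
`S(0,0) = 1`, `S(i,j) = 0` for `j > i` (automatic below), and the recursion
`S(i+1,j) = S(i,j-1) + (jb - ia + r) S(i,j)` (with `S(i,-1) := 0`). -/
noncomputable def gstir (a b r : ℝ) : ℕ → ℕ → ℝ
  | 0, 0 => 1
  | 0, _ + 1 => 0
  | i + 1, 0 => (r - i * a) * gstir a b r i 0
  | i + 1, j + 1 => gstir a b r i j + (((j : ℝ) + 1) * b - i * a + r) * gstir a b r i (j + 1)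

/-- the generalized factorial `(x|y)_n := ∏_{k=0}^{n-1} (x - k y)`. -/
noncomputable def genFall (x y : ℝ) (n : ℕ) : ℝ := ∏ k ∈ Finset.range n, (x - k * y)

/-- `q_{ij} := ((t-r|b)_j / (t|a)_i) S(i,j;a,b,r)`. -/
noncomputable def qgen (a b r t : ℝ) (i j : ℕ) : ℝ :=
  genFall (t - r) b j / genFall t a i * gstir a b r i j

open Filter Finset

lemma genFall_succ (x y : ℝ) (n : ℕ) : genFall x y (n + 1) = genFall x y n * (x - n * y) := by
  simp [genFall, Finset.prod_range_succ]

lemma genFall_ne (t a : ℝ) (ht : ∀ k : ℕ, t ≠ k * a) (i : ℕ) : genFall t a i ≠ 0 := by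
  refine Finset.prod_ne_zero_iff.2 fun k _ => sub_ne_zero.2 (ht k)

lemma qgen_zero (a b r t : ℝ) (m : ℕ) : qgen a b r t 0 m = if m = 0 then 1 else 0 := by
  cases m with
  | zero => simp [qgen, genFall, gstir]
  | succ m => simp [qgen, gstir]

lemma qr0 (a b r t : ℝ) (ht : ∀ k : ℕ, t ≠ k * a) (k : ℕ) :
    qgen a b r t (k + 1) 0 = (r - k * a) / (t - k * a) * qgen a b r t k 0 := by
  have h1 : genFall t a k ≠ 0 := genFall_ne t a ht k
  have h2 : t - k * a ≠ 0 := sub_ne_zero.2 (ht k)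
  simp only [qgen, genFall_succ]
  show genFall (t-r) b 0 / _ * ((r - k*a) * gstir a b r k 0) = _
  field_simp

lemma qrS (a b r t : ℝ) (ht : ∀ k : ℕ, t ≠ k * a) (k m : ℕ) :
    qgen a b r t (k + 1) (m + 1) =
      (t - r - m * b) / (t - k * a) * qgen a b r t k m
        + (((m : ℝ) + 1) * b - k * a + r) / (t - k * a) * qgen a b r t k (m + 1) := by
  have h1 : genFall t a k ≠ 0 := genFall_ne t a ht k
  have h2 : t - k * a ≠ 0 := sub_ne_zero.2 (ht k)
  simp only [qgen, genFall_succ]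
  show genFall (t-r) b m * (t - r - m*b) / _ * (gstir a b r k m + (((m:ℝ)+1)*b - k*a + r) * gstir a b r k (m+1)) = _
  field_simp

lemma key (a b r t : ℝ) (ht : ∀ k : ℕ, t ≠ k * a) (j k : ℕ) :
    ∑ m ∈ Finset.range (j + 1), qgen a b r t (k + 1) m =
      (∑ m ∈ Finset.range (j + 1), qgen a b r t k m)
        - (t - r - j * b) / (t - k * a) * qgen a b r t k j := by
  have h2 : t - k * a ≠ 0 := sub_ne_zero.2 (ht k)
  induction j with
  | zero =>
      simp only [zero_add, Finset.sum_range_one, qr0 a b r t ht k, Nat.cast_zero,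
        zero_mul, sub_zero]
      field_simp
      ring
  | succ j ih =>
      rw [Finset.sum_range_succ (fun m => qgen a b r t (k + 1) m) (j + 1),
        Finset.sum_range_succ (fun m => qgen a b r t k m) (j + 1), ih,
        qrS a b r t ht k j]
      push_cast
      field_simp
      ring

section partialsums

variable (a b r t : ℝ) (j : ℕ)

/-- the summand -/
noncomputable def fgen (a b r t : ℝ) (j k : ℕ) : ℝ :=
  (t - r - j * b) / (t - k * a) * qgen a b r t k j

lemma partial_sum_eq_s9 (ht : ∀ k : ℕ, t ≠ k * a) (i n : ℕ) :
    ∑ m ∈ Finset.range n, fgen a b r t j (m + i) =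
      (∑ m ∈ Finset.range (j + 1), qgen a b r t i m)
        - ∑ m ∈ Finset.range (j + 1), qgen a b r t (n + i) m := by
  induction n with
  | zero => simp
  | succ n ih =>
      rw [Finset.sum_range_succ, ih]
      have hni : n + 1 + i = (n + i) + 1 := by omega
      rw [hni, key a b r t ht j (n + i)]
      simp only [fgen]
      ring

end partialsums

/-- eventually sign-constant sequences -/
def EvSign (u : ℕ → ℝ) : Prop :=
  (∀ᶠ k in Filter.atTop, 0 ≤ u k) ∨ (∀ᶠ k in Filter.atTop, u k ≤ 0)

lemma EvSign.neg {u : ℕ → ℝ} (h : EvSign u) : EvSign (fun k => -u k) := by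
  rcases h with h | h
  · exact Or.inr (h.mono fun k hk => by simpa using hk)
  · exact Or.inl (h.mono fun k hk => by simpa using hk)

lemma EvSign.mul {u v : ℕ → ℝ} (hu : EvSign u) (hv : EvSign v) :
    EvSign (fun k => u k * v k) := by
  rcases hu with hu | hu <;> rcases hv with hv | hv
  · exact Or.inl ((hu.and hv).mono fun k ⟨h1, h2⟩ => mul_nonneg h1 h2)
  · exact Or.inr ((hu.and hv).mono fun k ⟨h1, h2⟩ => mul_nonpos_of_nonneg_of_nonpos h1 h2)
  · exact Or.inr ((hu.and hv).mono fun k ⟨h1, h2⟩ => mul_nonpos_of_nonpos_of_nonneg h1 h2)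
  · exact Or.inl ((hu.and hv).mono fun k ⟨h1, h2⟩ => mul_nonneg_of_nonpos_of_nonpos h1 h2)

lemma evsign_of_rec {u w lam : ℕ → ℝ} (hlam : ∀ᶠ k in Filter.atTop, 0 ≤ lam k)
    (hw : EvSign w) (hrec : ∀ k, u (k + 1) = lam k * u k + w k) : EvSign u := by
  rcases hw with hw | hw
  · rcases ((hlam.and hw).exists_forall_of_atTop) with ⟨N, hN⟩
    by_cases hex : ∃ K, N ≤ K ∧ 0 ≤ u K
    · rcases hex with ⟨K, hK, hK0⟩
      left
      rw [Filter.eventually_atTop]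
      refine ⟨K, fun k hk => ?_⟩
      induction k with
      | zero => simpa [Nat.le_zero.1 hk ▸ hK0] using hK0
      | succ k ihk =>
          rcases Nat.lt_or_ge K (k + 1) with h | h
          · have hk' : K ≤ k := Nat.lt_succ_iff.1 h
            have h0 : 0 ≤ u k := ihk hk'
            have hNk : N ≤ k := le_trans hK hk'
            rw [hrec k]
            have := hN k hNk
            exact add_nonneg (mul_nonneg this.1 h0) this.2
          · have : K = k + 1 := Nat.le_antisymm hk h
            exact this ▸ hK0
    · right
      rw [Filter.eventually_atTop]
      push_neg at hex
      exact ⟨N, fun k hk => (hex k hk).le⟩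
  · rcases ((hlam.and hw).exists_forall_of_atTop) with ⟨N, hN⟩
    by_cases hex : ∃ K, N ≤ K ∧ u K ≤ 0
    · rcases hex with ⟨K, hK, hK0⟩
      right
      rw [Filter.eventually_atTop]
      refine ⟨K, fun k hk => ?_⟩
      induction k with
      | zero => simpa [Nat.le_zero.1 hk ▸ hK0] using hK0
      | succ k ihk =>
          rcases Nat.lt_or_ge K (k + 1) with h | h
          · have hk' : K ≤ k := Nat.lt_succ_iff.1 h
            have h0 : u k ≤ 0 := ihk hk'
            have hNk : N ≤ k := le_trans hK hk'
            rw [hrec k]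
            have := hN k hNk
            exact add_nonpos (mul_nonpos_of_nonneg_of_nonpos this.1 h0) this.2
          · have : K = k + 1 := Nat.le_antisymm hk h
            exact this ▸ hK0
    · left
      rw [Filter.eventually_atTop]
      push_neg at hex
      exact ⟨N, fun k hk => (hex k hk).le⟩

open Filter in
lemma ev_neg_lin {a : ℝ} (ha : 0 < a) (c : ℝ) : ∀ᶠ k : ℕ in atTop, c - (k : ℝ) * a < 0 := by
  have h : Filter.Tendsto (fun k : ℕ => (k : ℝ) * a) atTop atTop :=
    (tendsto_natCast_atTop_atTop).atTop_mul_const ha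
  exact (h.eventually_gt_atTop c).mono fun k hk => by linarith

open Filter in
lemma ev_pos_lin {a : ℝ} (ha : a < 0) (c : ℝ) : ∀ᶠ k : ℕ in atTop, 0 < c - (k : ℝ) * a := by
  have := ev_neg_lin (a := -a) (by linarith) (-c)
  exact this.mono fun k hk => by simp only [mul_neg] at hk; linarith

open Filter in
lemma ev_sign_den {a : ℝ} (ha : a ≠ 0) (t : ℝ) : EvSign (fun k : ℕ => (t - (k : ℝ) * a)⁻¹) := by
  rcases lt_or_gt_of_ne ha with h | h
  · exact Or.inl ((ev_pos_lin h t).mono fun k hk => by positivity)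
  · exact Or.inr ((ev_neg_lin h t).mono fun k hk => inv_nonpos.2 hk.le)

open Filter in
lemma evsign_const_div {a : ℝ} (ha : a ≠ 0) (t c : ℝ) :
    EvSign (fun k : ℕ => c / (t - (k : ℝ) * a)) := by
  have h1 : EvSign (fun _ : ℕ => c) := by
    rcases le_or_gt 0 c with h | h
    · exact Or.inl (Filter.Eventually.of_forall fun _ => h)
    · exact Or.inr (Filter.Eventually.of_forall fun _ => h.le)
  have := h1.mul (ev_sign_den ha t)
  simpa [div_eq_mul_inv] using this

open Filter in
lemma ev_lam {a : ℝ} (ha : a ≠ 0) (t c : ℝ) :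
    ∀ᶠ k : ℕ in atTop, 0 ≤ (c - (k : ℝ) * a) / (t - (k : ℝ) * a) := by
  rcases lt_or_gt_of_ne ha with h | h
  · exact ((ev_pos_lin h c).and (ev_pos_lin h t)).mono fun k ⟨h1, h2⟩ =>
      (div_pos h1 h2).le
  · exact ((ev_neg_lin h c).and (ev_neg_lin h t)).mono fun k ⟨h1, h2⟩ =>
      (div_pos_of_neg_of_neg h1 h2).le

lemma evsign_qgen {a : ℝ} (b r t : ℝ) (ha : a ≠ 0) (ht : ∀ k : ℕ, t ≠ k * a) (m : ℕ) :
    EvSign (fun k => qgen a b r t k m) := by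
  induction m with
  | zero =>
      refine evsign_of_rec (u := fun k => qgen a b r t k 0)
        (w := fun _ => 0) (lam := fun k => (r - (k : ℝ) * a) / (t - (k : ℝ) * a))
        (ev_lam ha t r) (Or.inl (Filter.Eventually.of_forall fun _ => le_refl 0))
        (fun k => by simp only [qr0 a b r t ht k]; ring)
  | succ m ih =>
      refine evsign_of_rec (u := fun k => qgen a b r t k (m + 1))
        (w := fun k => (t - r - m * b) / (t - (k : ℝ) * a) * qgen a b r t k m)
        (lam := fun k => ((m : ℝ) * b + b + r - (k : ℝ) * a) / (t - (k : ℝ) * a))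
        ?_ ((evsign_const_div ha t (t - r - m * b)).mul ih)
        (fun k => by simp only [qrS a b r t ht k m]; push_cast; ring_nf)
      exact ev_lam ha t ((m : ℝ) * b + b + r)

open Filter in
lemma summable_of_nonneg_tail {g : ℕ → ℝ} {S : ℝ} (N : ℕ) (h1 : ∀ k, N ≤ k → 0 ≤ g k)
    (h2 : Tendsto (fun n => ∑ k ∈ Finset.range n, g k) atTop (nhds S)) : Summable g := by
  rw [← summable_nat_add_iff N]
  have h3 : Tendsto (fun n => ∑ k ∈ Finset.range n, g (k + N)) atTop
      (nhds (S - ∑ k ∈ Finset.range N, g k)) := by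
    have h4 : Tendsto (fun n => ∑ k ∈ Finset.range (n + N), g k) atTop (nhds S) :=
      h2.comp (tendsto_add_atTop_nat N)
    have h5 : (fun n => ∑ k ∈ Finset.range n, g (k + N)) =
        fun n => (∑ k ∈ Finset.range (n + N), g k) - ∑ k ∈ Finset.range N, g k := by
      funext n
      rw [add_comm n N, Finset.sum_range_add]
      simp [add_comm]
    rw [h5]
    exact h4.sub_const _
  obtain ⟨C, hC⟩ := h3.bddAbove_range
  refine summable_of_sum_range_le (c := C) (fun n => h1 (n + N) (by omega)) fun n => ?_
  exact hC (Set.mem_range_self n)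

open Filter in
lemma summable_of_evsign {g : ℕ → ℝ} {S : ℝ} (h1 : EvSign g)
    (h2 : Tendsto (fun n => ∑ k ∈ Finset.range n, g k) atTop (nhds S)) : Summable g := by
  rcases h1 with h1 | h1
  · rcases h1.exists_forall_of_atTop with ⟨N, hN⟩
    exact summable_of_nonneg_tail N hN h2
  · rcases h1.exists_forall_of_atTop with ⟨N, hN⟩
    rw [← summable_neg_iff]
    refine summable_of_nonneg_tail (S := -S) N (fun k hk => by simpa using hN k hk) ?_
    simpa [← Finset.sum_neg_distrib] using h2.neg


/-- ratios for the `a = 0` case -/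
noncomputable def rgeo (b r t : ℝ) (l : ℕ) : ℝ := ((l : ℝ) * b + r) / t

/-- coefficients of the geometric decomposition of `qgen 0 b r t · m` -/
noncomputable def Acoef (b r t : ℝ) : ℕ → ℕ → ℝ
  | 0, l => if l = 0 then 1 else 0
  | m + 1, l =>
      if l ≤ m then
        (t - r - (m : ℝ) * b) / t * Acoef b r t m l / (rgeo b r t l - rgeo b r t (m + 1))
      else if l = m + 1 then
        - ∑ i ∈ Finset.range (m + 1),
            (t - r - (m : ℝ) * b) / t * Acoef b r t m i / (rgeo b r t i - rgeo b r t (m + 1))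
      else 0

lemma Acoef_zero (b r t : ℝ) {m l : ℕ} (h : m < l) : Acoef b r t m l = 0 := by
  cases m with
  | zero => simp [Acoef, show l ≠ 0 by omega]
  | succ m =>
      rw [Acoef]
      rw [if_neg (by omega), if_neg (by omega)]

lemma Acoef_sum (b r t : ℝ) (m : ℕ) :
    ∑ l ∈ Finset.range (m + 1), Acoef b r t m l = if m = 0 then 1 else 0 := by
  cases m with
  | zero => simp [Acoef]
  | succ m =>
      rw [Finset.sum_range_succ]
      have h1 : ∀ l ∈ Finset.range (m + 1), Acoef b r t (m + 1) l =
          (t - r - (m : ℝ) * b) / t * Acoef b r t m l / (rgeo b r t l - rgeo b r t (m + 1)) := by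
        intro l hl
        rw [Acoef, if_pos (by simpa [Nat.lt_succ_iff] using hl)]
      rw [Finset.sum_congr rfl h1]
      have h2 : Acoef b r t (m + 1) (m + 1) =
          - ∑ i ∈ Finset.range (m + 1),
            (t - r - (m : ℝ) * b) / t * Acoef b r t m i / (rgeo b r t i - rgeo b r t (m + 1)) := by
        rw [Acoef, if_neg (by omega), if_pos rfl]
      rw [h2]
      simp

lemma rgeo_inj {b r t : ℝ} (hb : b ≠ 0) (ht : t ≠ 0) {l l' : ℕ}
    (h : rgeo b r t l = rgeo b r t l') : l = l' := by
  simp only [rgeo, div_left_inj' ht, add_left_inj, mul_eq_mul_right_iff, Nat.cast_inj] at h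
  rcases h with h | h
  · exact h
  · exact absurd h hb

lemma Acoef_rec {b r t : ℝ} (hb : b ≠ 0) (ht : t ≠ 0) (m : ℕ) {l : ℕ} (hl : l ≤ m + 1) :
    Acoef b r t (m + 1) l * rgeo b r t l =
      rgeo b r t (m + 1) * Acoef b r t (m + 1) l
        + (t - r - (m : ℝ) * b) / t * Acoef b r t m l := by
  rcases Nat.lt_or_ge l (m + 1) with h | h
  · have hl' : l ≤ m := by omega
    have hne : rgeo b r t l - rgeo b r t (m + 1) ≠ 0 :=
      sub_ne_zero.2 fun e => by have := rgeo_inj hb ht e; omega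
    rw [Acoef, if_pos hl']
    field_simp
    ring
  · have hl'' : l = m + 1 := by omega
    subst hl''
    have e2 : Acoef b r t m (m + 1) = 0 := Acoef_zero b r t (by omega)
    rw [e2]
    ring

lemma qgen_a0_decomp {b r t : ℝ} (hb : b ≠ 0) (htz : ∀ k : ℕ, t ≠ (k : ℝ) * 0) (k m : ℕ) :
    qgen 0 b r t k m =
      ∑ l ∈ Finset.range (m + 1), Acoef b r t m l * rgeo b r t l ^ k := by
  have ht : t ≠ 0 := by simpa using htz 0
  induction k generalizing m with
  | zero =>
      rw [qgen_zero]
      simp only [pow_zero, mul_one, Acoef_sum]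
  | succ k ih =>
      cases m with
      | zero =>
          have h0 := qr0 0 b r t htz k
          simp only [mul_zero, sub_zero] at h0
          rw [h0, ih 0]
          simp [Acoef, rgeo, pow_succ]
          ring
      | succ m =>
          have hS := qrS 0 b r t htz k m
          simp only [mul_zero, sub_zero] at hS
          rw [hS, ih m, ih (m + 1)]
          have hrw : ∀ l ∈ Finset.range (m + 2),
              Acoef b r t (m + 1) l * rgeo b r t l ^ (k + 1) =
                rgeo b r t (m + 1) * (Acoef b r t (m + 1) l * rgeo b r t l ^ k)
                  + (t - r - (m : ℝ) * b) / t * (Acoef b r t m l * rgeo b r t l ^ k) := by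
            intro l hl
            have := Acoef_rec (r := r) hb ht m (l := l) (by simpa [Nat.lt_succ_iff] using hl)
            calc Acoef b r t (m + 1) l * rgeo b r t l ^ (k + 1)
                = (Acoef b r t (m + 1) l * rgeo b r t l) * rgeo b r t l ^ k := by ring
              _ = _ := by rw [this]; ring
          rw [Finset.sum_congr rfl hrw, Finset.sum_add_distrib, ← Finset.mul_sum,
            ← Finset.mul_sum]
          have hlast : ∑ l ∈ Finset.range (m + 2), Acoef b r t m l * rgeo b r t l ^ k =
              ∑ l ∈ Finset.range (m + 1), Acoef b r t m l * rgeo b r t l ^ k := by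
            rw [Finset.sum_range_succ, Acoef_zero b r t (by omega)]
            simp
          rw [hlast]
          simp only [rgeo]
          push_cast
          ring

open Filter in
lemma comp_tendsto (ρ : ℕ → ℝ) (s : Finset ℕ) :
    ∀ c : ℕ → ℝ, Set.InjOn ρ ↑s →
      Tendsto (fun k => ∑ l ∈ s, c l * ρ l ^ k) atTop (nhds 0) →
      ∀ l₀ ∈ s, Tendsto (fun k => c l₀ * ρ l₀ ^ k) atTop (nhds 0) := by
  induction s using Finset.strongInduction with
  | _ s ih =>
    intro c hinj h l₀ hl₀
    by_cases hs : ∃ l₁ ∈ s, l₁ ≠ l₀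
    · obtain ⟨l₁, hl₁, hne⟩ := hs
      have hT : Tendsto (fun k => ∑ l ∈ s.erase l₁, (c l * (ρ l - ρ l₁)) * ρ l ^ k)
          atTop (nhds 0) := by
        have h1 : Tendsto (fun k => (∑ l ∈ s, c l * ρ l ^ (k + 1))
            - ρ l₁ * ∑ l ∈ s, c l * ρ l ^ k) atTop (nhds 0) := by
          have := (h.comp (tendsto_add_atTop_nat 1)).sub (h.const_mul (ρ l₁))
          simpa using this
        have h2 : ∀ k : ℕ, (∑ l ∈ s, c l * ρ l ^ (k + 1))
            - ρ l₁ * ∑ l ∈ s, c l * ρ l ^ k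
              = ∑ l ∈ s.erase l₁, (c l * (ρ l - ρ l₁)) * ρ l ^ k := by
          intro k
          rw [Finset.mul_sum, ← Finset.sum_sub_distrib]
          rw [← Finset.add_sum_erase _ _ hl₁]
          have : c l₁ * ρ l₁ ^ (k + 1) - ρ l₁ * (c l₁ * ρ l₁ ^ k) = 0 := by ring
          rw [this, zero_add]
          exact Finset.sum_congr rfl fun l _ => by ring
        exact h1.congr h2
      have hmem : l₀ ∈ s.erase l₁ := Finset.mem_erase.2 ⟨fun e => hne e.symm, hl₀⟩
      have hres := ih (s.erase l₁) (Finset.erase_ssubset hl₁)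
        (fun l => c l * (ρ l - ρ l₁))
        (hinj.mono (by simp only [Finset.coe_erase]; exact Set.diff_subset)) hT l₀ hmem
      have hz : ρ l₀ - ρ l₁ ≠ 0 :=
        sub_ne_zero.2 fun e => hne (hinj hl₁ hl₀ e.symm)
      have h9 := hres.const_mul (ρ l₀ - ρ l₁)⁻¹
      rw [mul_zero] at h9
      refine h9.congr fun k => ?_
      field_simp
    · push_neg at hs
      have hsing : s = {l₀} := Finset.eq_singleton_iff_unique_mem.2 ⟨hl₀, fun x hx => hs x hx⟩
      rw [hsing] at h
      simpa using h

open Filter in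
lemma summable_of_comp_tendsto {c ρ : ℕ → ℝ} {n : ℕ} (hinj : Set.InjOn ρ ↑(Finset.range n))
    (h : Tendsto (fun k => ∑ l ∈ Finset.range n, c l * ρ l ^ k) atTop (nhds 0)) :
    Summable (fun k => ∑ l ∈ Finset.range n, c l * ρ l ^ k) := by
  refine summable_sum fun l hl => ?_
  have hcomp := comp_tendsto ρ (Finset.range n) c hinj h l hl
  by_cases hc : c l = 0
  · simp only [hc, zero_mul]
    exact summable_zero
  · have hpow : Tendsto (fun k => ρ l ^ k) atTop (nhds 0) := by
      have := hcomp.const_mul (c l)⁻¹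
      rw [mul_zero] at this
      refine this.congr fun k => ?_
      field_simp
    have habs : |ρ l| < 1 := tendsto_pow_atTop_nhds_zero_iff.1 hpow
    exact (summable_geometric_of_norm_lt_one (by simpa using habs)).mul_left (c l)

lemma qgen_a0b0 {r t : ℝ} (htz : ∀ k : ℕ, t ≠ (k : ℝ) * 0) (k m : ℕ) :
    qgen 0 0 r t k m = (Nat.choose k m : ℝ) * ((t - r) / t) ^ m * (r / t) ^ (k - m) := by
  induction k generalizing m with
  | zero =>
      rw [qgen_zero]
      cases m with
      | zero => simp
      | succ m => simp
  | succ k ih =>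
      cases m with
      | zero =>
          have h0 := qr0 0 0 r t htz k
          simp only [mul_zero, sub_zero] at h0
          rw [h0, ih 0]
          simp [pow_succ]
          ring
      | succ m =>
          have hS := qrS 0 0 r t htz k m
          simp only [mul_zero, sub_zero, add_zero, zero_mul] at hS
          rw [hS, ih m, ih (m + 1)]
          rw [Nat.choose_succ_succ k m]
          rcases Nat.lt_or_ge k (m + 1) with h | h
          · have h1 : Nat.choose k (m + 1) = 0 := Nat.choose_eq_zero_of_lt h
            have h2 : k + 1 - (m + 1) = 0 := by omega
            have h3 : k - m = 0 := by omega
            rw [h1, h2, h3]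
            push_cast
            ring
          · have h2 : k + 1 - (m + 1) = k - m := by omega
            have h3 : k - m = (k - (m + 1)) + 1 := by omega
            rw [h2, h3, pow_succ]
            push_cast
            ring

open Filter in
lemma summable_qgen_a0b0 {r t : ℝ} (htz : ∀ k : ℕ, t ≠ (k : ℝ) * 0) (j : ℕ)
    (hc : t - r ≠ 0) (h0 : Tendsto (fun k => qgen 0 0 r t k j) atTop (nhds 0)) :
    Summable (fun k => qgen 0 0 r t k j) := by
  have ht : t ≠ 0 := by simpa using htz 0
  by_cases hr : r = 0
  · subst hr
    rw [← summable_nat_add_iff (j + 1)]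
    have : ∀ n : ℕ, qgen 0 0 0 t (n + (j + 1)) j = 0 := by
      intro n
      rw [qgen_a0b0 htz]
      have : n + (j + 1) - j = n + 1 := by omega
      rw [this]
      simp
    simpa [this] using summable_zero
  · set σ := r / t with hσdef
    set τ := (t - r) / t with hτdef
    have hσ : σ ≠ 0 := div_ne_zero hr ht
    have hτ : τ ≠ 0 := div_ne_zero hc ht
    have h1 : Tendsto (fun k => (Nat.choose k j : ℝ) * σ ^ (k - j)) atTop (nhds 0) := by
      have := h0.const_mul (τ ^ j)⁻¹
      rw [mul_zero] at this
      refine this.congr fun k => ?_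
      rw [qgen_a0b0 htz]
      calc (τ ^ j)⁻¹ * ((Nat.choose k j : ℝ) * τ ^ j * σ ^ (k - j))
          = (Nat.choose k j : ℝ) * σ ^ (k - j) * ((τ ^ j)⁻¹ * τ ^ j) := by ring
        _ = (Nat.choose k j : ℝ) * σ ^ (k - j) := by
            rw [inv_mul_cancel₀ (pow_ne_zero j hτ), mul_one]
    have h2 : Tendsto (fun n : ℕ => (Nat.choose (n + j) j : ℝ) * σ ^ n) atTop (nhds 0) := by
      have := h1.comp (tendsto_add_atTop_nat j)
      refine this.congr fun n => ?_
      simp [Nat.add_sub_cancel]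
    have habs : |σ| < 1 := by
      have h3 : Tendsto (fun n : ℕ => |(Nat.choose (n + j) j : ℝ) * σ ^ n|) atTop (nhds 0) := by
        simpa using h2.abs
      have h4 : Tendsto (fun n : ℕ => |σ| ^ n) atTop (nhds 0) := by
        refine squeeze_zero (fun n => by positivity) (fun n => ?_) h3
        rw [abs_mul, abs_pow]
        have hch : (1 : ℝ) ≤ |(Nat.choose (n + j) j : ℝ)| := by
          rw [abs_of_nonneg (by positivity)]
          exact_mod_cast Nat.succ_le_of_lt (Nat.choose_pos (by omega))
        nlinarith [abs_nonneg σ, pow_nonneg (abs_nonneg σ) n]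
      have := tendsto_pow_atTop_nhds_zero_iff.1 h4
      rwa [abs_abs] at this
    have hsum : Summable (fun k : ℕ => (|τ| ^ j / |σ| ^ j) * ((k : ℝ) ^ j * |σ| ^ k)) :=
      ((summable_pow_mul_geometric_of_norm_lt_one (R := ℝ) (r := |σ|) j (by simpa using habs)).mul_left _)
    refine Summable.of_norm_bounded hsum fun k => ?_
    rw [Real.norm_eq_abs, qgen_a0b0 htz]
    rcases Nat.lt_or_ge k j with h | h
    · rw [Nat.choose_eq_zero_of_lt h]
      simp only [Nat.cast_zero, zero_mul, abs_zero]
      positivity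
    · rw [abs_mul, abs_mul, abs_pow, abs_pow]
      have e1 : |σ| ^ (k - j) = |σ| ^ k / |σ| ^ j := by
        rw [pow_sub₀ _ (abs_ne_zero.2 hσ) h, div_eq_mul_inv]
      have e2 : |(Nat.choose k j : ℝ)| ≤ (k : ℝ) ^ j := by
        rw [abs_of_nonneg (by positivity)]
        exact_mod_cast Nat.choose_le_pow k j
      rw [e1]
      have hpos : (0 : ℝ) < |σ| ^ j := by positivity
      calc |(Nat.choose k j : ℝ)| * |τ| ^ j * (|σ| ^ k / |σ| ^ j)
          ≤ (k : ℝ) ^ j * |τ| ^ j * (|σ| ^ k / |σ| ^ j) := by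
            have hnn : (0 : ℝ) ≤ |τ| ^ j * (|σ| ^ k / |σ| ^ j) := by positivity
            nlinarith [abs_nonneg ((Nat.choose k j : ℝ))]
        _ = |τ| ^ j / |σ| ^ j * ((k : ℝ) ^ j * |σ| ^ k) := by ring


/-- let `a,b,r,t ∈ ℝ` with `t ∉ {0,a,2a,…}`.  Fix `j` and suppose
`L = lim_{k→∞} q_{k,≤j}` exists, where `q_{i,≤j} := ∑_{m=0}^{j} q_{im}`.  Then for every
`i ≥ 0` the series `∑_{k=i}^{∞} ((t-r-jb)/(t-ka)) q_{kj}` converges with sum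
`q_{i,≤j} - L` (the series over `k ≥ i` being indexed by `k = m + i`, `m : ℕ`). -/
theorem statement9 (a b r t : ℝ) (ht : ∀ k : ℕ, t ≠ k * a) (j : ℕ) (L : ℝ)
    (hL : Filter.Tendsto (fun i : ℕ => ∑ m ∈ Finset.range (j + 1), qgen a b r t i m)
      Filter.atTop (nhds L)) :
    ∀ i : ℕ, HasSum
      (fun m : ℕ => (t - r - j * b) / (t - (m + i) * a) * qgen a b r t (m + i) j)
      ((∑ m ∈ Finset.range (j + 1), qgen a b r t i m) - L) := by
  set f : ℕ → ℝ := fgen a b r t j with hf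
  have hQL : Tendsto (fun k : ℕ => ∑ m ∈ Finset.range (j + 1), qgen a b r t k m)
      atTop (nhds L) := hL
  have hfkey : ∀ k, f k = (∑ m ∈ Finset.range (j + 1), qgen a b r t k m) -
      ∑ m ∈ Finset.range (j + 1), qgen a b r t (k + 1) m := by
    intro k
    have := key a b r t ht j k
    simp only [hf, fgen]
    linarith
  have hf0 : Tendsto f atTop (nhds 0) := by
    have h1 := hQL.sub (hQL.comp (tendsto_add_atTop_nat 1))
    rw [sub_self] at h1
    exact h1.congr fun k => (hfkey k).symm
  have hps : ∀ i : ℕ, Tendsto (fun n => ∑ m ∈ Finset.range n, f (m + i)) atTop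
      (nhds ((∑ m ∈ Finset.range (j + 1), qgen a b r t i m) - L)) := by
    intro i
    have h1 : Tendsto (fun n : ℕ => (∑ m ∈ Finset.range (j + 1), qgen a b r t i m) -
        ∑ m ∈ Finset.range (j + 1), qgen a b r t (n + i) m) atTop
        (nhds ((∑ m ∈ Finset.range (j + 1), qgen a b r t i m) - L)) :=
      tendsto_const_nhds.sub (hQL.comp (tendsto_add_atTop_nat i))
    exact h1.congr fun n => (partial_sum_eq_s9 a b r t j ht i n).symm
  have hsummf : Summable f := by
    by_cases hc : t - r - j * b = 0
    · have hzz : f = fun _ => 0 := funext fun k => by simp [hf, fgen, hc]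
      rw [hzz]
      exact summable_zero
    by_cases ha : a = 0
    · subst ha
      have htne : t ≠ 0 := by simpa using ht 0
      have hq0 : Tendsto (fun k => qgen 0 b r t k j) atTop (nhds 0) := by
        have h2 := hf0.const_mul (t / (t - r - j * b))
        rw [mul_zero] at h2
        refine h2.congr fun k => ?_
        simp only [hf, fgen, mul_zero, sub_zero]
        field_simp
      have hq : Summable (fun k => qgen 0 b r t k j) := by
        by_cases hb : b = 0
        · subst hb
          exact summable_qgen_a0b0 ht j (by simpa using hc) hq0
        · have hdec := fun k => qgen_a0_decomp (r := r) hb ht k j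
          have hinj : Set.InjOn (rgeo b r t) ↑(Finset.range (j + 1)) :=
            fun x _ y _ e => rgeo_inj hb htne e
          have hsum2 := summable_of_comp_tendsto hinj (hq0.congr hdec)
          exact hsum2.congr fun k => (hdec k).symm
      have h3 : Summable fun k => (t - r - j * b) / t * qgen 0 b r t k j := hq.mul_left _
      refine h3.congr fun k => ?_
      simp [hf, fgen]
    · have hEv : EvSign f := by
        have h1 := (evsign_const_div ha t (t - r - j * b)).mul (evsign_qgen b r t ha ht j)
        have h2 : f = fun k : ℕ => (t - r - j * b) / (t - (k : ℝ) * a) * qgen a b r t k j :=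
          funext fun k => rfl
        rw [h2]
        exact h1
      have hps0 : Tendsto (fun n => ∑ k ∈ Finset.range n, f k) atTop
          (nhds ((∑ m ∈ Finset.range (j + 1), qgen a b r t 0 m) - L)) := by
        have := hps 0
        simpa using this
      exact summable_of_evsign hEv hps0
  intro i
  have hsi : Summable (fun m => f (m + i)) := (summable_nat_add_iff i).2 hsummf
  have hhs := hsi.hasSum
  have htend := hhs.tendsto_sum_nat
  have heq := tendsto_nhds_unique htend (hps i)
  rw [heq] at hhs
  have hfun : (fun m : ℕ => (t - r - j * b) / (t - (m + i) * a) * qgen a b r t (m + i) j)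
      = fun m => f (m + i) := by
    funext m
    simp only [hf, fgen]
    push_cast
    ring_nf
  rw [hfun]
  exact hhs
end

section
/- Let α ∈ ℝ. For integers i ≥ j ≥ 1 define T(i,j) := (i!/j!) · Σ_{i_1,…,i_j ≥ 1, i_1+⋯+i_j = i} Π_{l=1}^{j} [α+1]_{i_l − 1} / i_l!, where [y]_m := y(y+1)⋯(y+m−1); set T(0,0) := 1 and T(i,j) := 0 if j > i or (j = 0 and i ≥ 1). Then T(i,j) = S_α(i,j) for all i, j ≥ 0, where S_α(i,j) := S(i,j;−1,α,0) are the generalized Stirling numbers defined by S_α(0,0) = 1, S_α(i,j) = 0 for j < 0 or j > i, and S_α(i+1,j) = S_α(i,j−1) + (i + αj)·S_α(i,j). -/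
/-- the rising factorial `[y]_m := y (y+1) ⋯ (y+m-1)`. -/
noncomputable def risingFac (y : ℝ) (m : ℕ) : ℝ := ∏ k ∈ Finset.range m, (y + k)

/-- `T(i,j) := (i!/j!) ∑_{i_1+⋯+i_j = i, i_l ≥ 1} ∏_l [α+1]_{i_l - 1}/i_l!`, the sum running
over compositions of `i` into `j` positive parts.  This single formula also realizes the
boundary values: `T(0,0) = 1` and `T(i,j) = 0` if `j > i` or (`j = 0` and `i ≥ 1`), since
in those cases the index set is empty (and for `i = j = 0` it is the single empty tuple). -/
noncomputable def gg (α : ℝ) (m : ℕ) : ℝ := risingFac (α + 1) (m - 1) / (Nat.factorial m)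

lemma gg_one (α : ℝ) : gg α 1 = 1 := by simp [gg, risingFac]

lemma mul_gg (α : ℝ) {m : ℕ} (hm : 2 ≤ m) :
    (m : ℝ) * gg α m = (α + m - 1) * gg α (m - 1) := by
  obtain ⟨k, rfl⟩ : ∃ k, m = k + 2 := ⟨m - 2, by omega⟩
  have h1 : (k + 2) - 1 = k + 1 := rfl
  have h2 : (k + 2) - 1 - 1 = k := rfl
  simp only [gg, h1, h2, risingFac, Finset.prod_range_succ, Nat.factorial_succ]
  have hk : (Nat.factorial (k+1) : ℝ) ≠ 0 := Nat.cast_ne_zero.2 (Nat.factorial_ne_zero _)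
  push_cast
  field_simp
  ring

noncomputable def Scomp (α : ℝ) (j i : ℕ) : ℝ :=
  ∑ c ∈ (Finset.Nat.antidiagonalTuple j i).filter fun c => ∀ l, 1 ≤ c l,
    ∏ l, gg α (c l)

lemma col_sum (α : ℝ) (i j : ℕ) (l : Fin (j+1)) :
    ∑ c ∈ (Finset.Nat.antidiagonalTuple (j+1) (i+1)).filter (fun c => ∀ l', 1 ≤ c l'),
      (c l : ℝ) * ∏ l', gg α (c l')
    = Scomp α j i
      + ∑ c ∈ (Finset.Nat.antidiagonalTuple (j+1) i).filter (fun c => ∀ l', 1 ≤ c l'),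
          ((α + c l) * ∏ l', gg α (c l')) := by
  rw [← Finset.sum_filter_add_sum_filter_not _ (fun c => c l = 1)]
  congr 1
  · -- part A
    rw [Scomp]
    refine Finset.sum_nbij' (fun c => Fin.removeNth l c) (fun c => Fin.insertNth l 1 c)
      ?_ ?_ ?_ ?_ ?_
    · intro c hc
      simp only [Finset.mem_filter, Finset.Nat.mem_antidiagonalTuple] at hc ⊢
      obtain ⟨⟨hsum, hpos⟩, hl⟩ := hc
      have hd := Fin.sum_univ_succAbove c l
      constructor
      · rw [hsum] at hd
        have : ∀ x, Fin.removeNth l c x = c (l.succAbove x) := fun x => rfl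
        simp only [this]
        omega
      · intro x; exact hpos _
    · intro c hc
      simp only [Finset.mem_filter, Finset.Nat.mem_antidiagonalTuple] at hc ⊢
      obtain ⟨hsum, hpos⟩ := hc
      refine ⟨⟨?_, ?_⟩, ?_⟩
      · rw [Fin.sum_univ_succAbove _ l]
        simp only [Fin.insertNth_apply_same, Fin.insertNth_apply_succAbove]
        omega
      · rw [Fin.forall_iff_succAbove l]
        simp [hpos]
      · simp
    · intro c hc
      simp only [Finset.mem_filter] at hc
      have h := Fin.insertNth_self_removeNth l c
      rwa [hc.2] at h
    · intro c hc
      simp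
    · intro c hc
      simp only [Finset.mem_filter] at hc
      rw [Fin.prod_univ_succAbove (fun l' => gg α (c l')) l, hc.2, gg_one]
      simp only [Nat.cast_one, one_mul]
      rfl
  · -- part B
    refine Finset.sum_nbij' (fun c => Function.update c l (c l - 1))
      (fun c => Function.update c l (c l + 1)) ?_ ?_ ?_ ?_ ?_
    · intro c hc
      simp only [Finset.mem_filter, Finset.Nat.mem_antidiagonalTuple] at hc ⊢
      obtain ⟨⟨hsum, hpos⟩, hl⟩ := hc
      have h2 : 2 ≤ c l := by have := hpos l; omega
      have hd := Fin.sum_univ_succAbove c l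
      have hd' := Fin.sum_univ_succAbove (Function.update c l (c l - 1)) l
      simp only [Function.update_self] at hd'
      have heq : ∀ x, Function.update c l (c l - 1) (l.succAbove x) = c (l.succAbove x) :=
        fun x => Function.update_of_ne (Fin.succAbove_ne l x) _ _
      constructor
      · simp only [heq] at hd'; omega
      · intro x
        rcases eq_or_ne x l with rfl | hx
        · simp only [Function.update_self]; omega
        · rw [Function.update_of_ne hx]; exact hpos x
    · intro c hc
      simp only [Finset.mem_filter, Finset.Nat.mem_antidiagonalTuple] at hc ⊢
      obtain ⟨hsum, hpos⟩ := hc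
      have hd := Fin.sum_univ_succAbove c l
      have hd' := Fin.sum_univ_succAbove (Function.update c l (c l + 1)) l
      simp only [Function.update_self] at hd'
      have heq : ∀ x, Function.update c l (c l + 1) (l.succAbove x) = c (l.succAbove x) :=
        fun x => Function.update_of_ne (Fin.succAbove_ne l x) _ _
      refine ⟨⟨?_, ?_⟩, ?_⟩
      · simp only [heq] at hd'; omega
      · intro x
        rcases eq_or_ne x l with rfl | hx
        · simp only [Function.update_self]; omega
        · rw [Function.update_of_ne hx]; exact hpos x
      · simp only [Function.update_self]
        have := hpos l; omega
    · intro c hc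
      simp only [Finset.mem_filter, Finset.Nat.mem_antidiagonalTuple] at hc
      obtain ⟨⟨hsum, hpos⟩, hl⟩ := hc
      have h2 : 2 ≤ c l := by have := hpos l; omega
      funext x
      rcases eq_or_ne x l with rfl | hx
      · simp only [Function.update_self]; omega
      · simp [Function.update_of_ne hx]
    · intro c hc
      funext x
      rcases eq_or_ne x l with rfl | hx
      · simp only [Function.update_self]; omega
      · simp [Function.update_of_ne hx]
    · intro c hc
      simp only [Finset.mem_filter, Finset.Nat.mem_antidiagonalTuple] at hc
      obtain ⟨⟨hsum, hpos⟩, hl⟩ := hc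
      have h2 : 2 ≤ c l := by have := hpos l; omega
      rw [Fin.prod_univ_succAbove (fun l' => gg α (c l')) l,
        Fin.prod_univ_succAbove (fun l' => gg α (Function.update c l (c l - 1) l')) l]
      have heq : ∀ x : Fin j, Function.update c l (c l - 1) (l.succAbove x) = c (l.succAbove x) :=
        fun x => Function.update_of_ne (Fin.succAbove_ne l x) _ _
      simp only [heq, Function.update_self]
      have hcast : ((c l - 1 : ℕ) : ℝ) = (c l : ℝ) - 1 := by
        have : 1 ≤ c l := hpos l
        push_cast [this]; ring
      rw [hcast, ← mul_assoc, ← mul_assoc, mul_gg α h2]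
      ring_nf

lemma Scomp_rec (α : ℝ) (i j : ℕ) :
    ((i:ℝ)+1) * Scomp α (j+1) (i+1)
      = ((j:ℝ)+1) * Scomp α j i + (((j:ℝ)+1)*α + i) * Scomp α (j+1) i := by
  have lhs : ((i:ℝ)+1) * Scomp α (j+1) (i+1)
      = ∑ l : Fin (j+1),
          ∑ c ∈ (Finset.Nat.antidiagonalTuple (j+1) (i+1)).filter (fun c => ∀ l', 1 ≤ c l'),
            (c l : ℝ) * ∏ l', gg α (c l') := by
    rw [Scomp, Finset.mul_sum, Finset.sum_comm]
    refine Finset.sum_congr rfl fun c hc => ?_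
    simp only [Finset.mem_filter, Finset.Nat.mem_antidiagonalTuple] at hc
    have hcast : ((i:ℝ)+1) = ∑ l : Fin (j+1), (c l : ℝ) := by
      rw [← Nat.cast_sum, hc.1]; push_cast; ring
    rw [hcast, Finset.sum_mul]
  rw [lhs]
  have : ∀ l : Fin (j+1),
      (∑ c ∈ (Finset.Nat.antidiagonalTuple (j+1) (i+1)).filter (fun c => ∀ l', 1 ≤ c l'),
        (c l : ℝ) * ∏ l', gg α (c l'))
      = Scomp α j i
        + ∑ c ∈ (Finset.Nat.antidiagonalTuple (j+1) i).filter (fun c => ∀ l', 1 ≤ c l'),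
            ((α + c l) * ∏ l', gg α (c l')) := fun l => col_sum α i j l
  rw [Finset.sum_congr rfl (fun l _ => this l), Finset.sum_add_distrib, Finset.sum_const,
    Finset.card_univ, Fintype.card_fin, Finset.sum_comm]
  congr 1
  · push_cast [nsmul_eq_mul]; ring
  · rw [Scomp, Finset.mul_sum]
    refine Finset.sum_congr rfl fun c hc => ?_
    simp only [Finset.mem_filter, Finset.Nat.mem_antidiagonalTuple] at hc
    rw [← Finset.sum_mul]
    congr 1
    rw [Finset.sum_add_distrib, Finset.sum_const, Finset.card_univ, Fintype.card_fin,
      ← Nat.cast_sum, hc.1]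
    push_cast [nsmul_eq_mul]; ring

noncomputable def Tcomb (α : ℝ) (i j : ℕ) : ℝ :=
  (Nat.factorial i : ℝ) / (Nat.factorial j) *
    ∑ c ∈ (Finset.Nat.antidiagonalTuple j i).filter fun c => ∀ l, 1 ≤ c l,
      ∏ l, risingFac (α + 1) (c l - 1) / (Nat.factorial (c l))

lemma Tcomb_eq (α : ℝ) (i j : ℕ) :
    Tcomb α i j = (Nat.factorial i : ℝ) / (Nat.factorial j) * Scomp α j i := rfl

lemma Tcomb_rec (α : ℝ) (i j : ℕ) :
    Tcomb α (i+1) (j+1) = Tcomb α i j + (((j:ℝ)+1)*α + i) * Tcomb α i (j+1) := by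
  have key := Scomp_rec α i j
  have hi1 : ((i:ℝ)+1) ≠ 0 := by positivity
  have hS1 : Scomp α (j+1) (i+1)
      = (((j:ℝ)+1) * Scomp α j i + (((j:ℝ)+1)*α + i) * Scomp α (j+1) i) / ((i:ℝ)+1) := by
    rw [eq_div_iff hi1]; linarith [key]
  have hj : (Nat.factorial j : ℝ) ≠ 0 := Nat.cast_ne_zero.2 (Nat.factorial_ne_zero _)
  have hj1 : ((j:ℝ)+1) ≠ 0 := by positivity
  rw [Tcomb_eq, Tcomb_eq, Tcomb_eq, hS1, Nat.factorial_succ, Nat.factorial_succ]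
  push_cast
  field_simp

lemma Tcomb_zero_zero (α : ℝ) : Tcomb α 0 0 = 1 := by
  simp [Tcomb]

lemma Tcomb_zero_succ (α : ℝ) (j : ℕ) : Tcomb α 0 (j+1) = 0 := by
  have h0 : ¬ (∀ l : Fin (j+1), 1 ≤ (0 : Fin (j+1) → ℕ) l) := by simp
  simp [Tcomb, Finset.Nat.antidiagonalTuple_zero_right, Finset.filter_singleton, h0]

lemma Tcomb_succ_zero (α : ℝ) (i : ℕ) : Tcomb α (i+1) 0 = 0 := by
  simp [Tcomb]

/-- `T(i,j) = S_α(i,j) := S(i,j; -1, α, 0)` for all `i, j ≥ 0`, the latter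
satisfying `S_α(0,0) = 1`, `S_α(i,j) = 0` for `j > i`, and
`S_α(i+1,j) = S_α(i,j-1) + (i + αj) S_α(i,j)`. -/
theorem statement11 (α : ℝ) : ∀ i j : ℕ, Tcomb α i j = gstir (-1) α 0 i j := by
  intro i
  induction i with
  | zero =>
    intro j
    cases j with
    | zero => rw [Tcomb_zero_zero]; rfl
    | succ j => rw [Tcomb_zero_succ]; rfl
  | succ i ih =>
    intro j
    cases j with
    | zero =>
      rw [Tcomb_succ_zero]
      show (0:ℝ) = (0 - (i:ℝ) * (-1)) * gstir (-1) α 0 i 0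
      rw [← ih 0]
      cases i with
      | zero => norm_num
      | succ k => rw [Tcomb_succ_zero]; ring
    | succ j =>
      show Tcomb α (i+1) (j+1)
        = gstir (-1) α 0 i j + (((j:ℝ)+1) * α - (i:ℝ) * (-1) + 0) * gstir (-1) α 0 i (j+1)
      rw [← ih j, ← ih (j+1), Tcomb_rec]
      ring
end
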